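/- arXiv:2109.04519 — 5 statements merged into one kernel-verified Lean document; each statement's English description precedes it below -/
import Mathlib

section
/- For every positive integer m and every integer n ≥ α_t, D^m(I,n) = 𝔡^m(I,n) + 𝔡^m(I \ {α_t}, n). -/
open Finset

/-- Sequences of length `ℓ` (positions `1..ℓ`) with entries in `{1,…,n}`,
encoded as functions `ℕ → ℕ` vanishing outside `[1, ℓ]`. -/
def Seqs (ℓ n : ℕ) : Set (ℕ → ℕ) :=
  {v | (∀ i ∈ Finset.Icc 1 ℓ, v i ∈ Finset.Icc 1 n) ∧ ∀ i, i ∉ Finset.Icc 1 ℓ → v i = 0}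

/-- Descent set of a sequence of length `ℓ`:
`Des(v) = {i ∈ {1,…,ℓ-1} : v_i > v_{i+1}}`. -/
def Des (ℓ : ℕ) (v : ℕ → ℕ) : Set ℕ :=
  {i | 1 ≤ i ∧ i < ℓ ∧ v (i + 1) < v i}

/-- Number of occurrences of the value `j` among positions `1..ℓ` of `v`. -/
def mult (ℓ : ℕ) (v : ℕ → ℕ) (j : ℕ) : ℕ :=
  ((Finset.Icc 1 ℓ).filter fun i => v i = j).card

/-- `𝔡^m(I, n)`: the number of sequences of length `n*m`, in which each of `1,…,n`
appears exactly `m` times, whose descent set is `I`. -/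
noncomputable def dP (m : ℕ) (I : Finset ℕ) (n : ℕ) : ℕ :=
  Set.ncard {w ∈ Seqs (n * m) n |
    Des (n * m) w = ↑I ∧ ∀ j ∈ Finset.Icc 1 n, mult (n * m) w j = m}

/-- `N(I, n)`: the number of sequences `v = (v_1, …, v_{α_t})` with entries in `{1,…,n}`
such that `Des v = I \ {α_t}` and `v_{α_t} ≠ 1`. -/
noncomputable def Ncount (I : Finset ℕ) (n : ℕ) : ℕ :=
  Set.ncard {v ∈ Seqs (I.sup id) n |
    Des (I.sup id) v = ↑(I.erase (I.sup id)) ∧ v (I.sup id) ≠ 1}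

/-- `D^m(I, n)`: the number of sequences `v = (v_1, …, v_{α_t})` with entries in `{1,…,n}`
such that `Des v = I \ {α_t}` and each of `1,…,n` appears at most `m` times in `v`. -/
noncomputable def Dcount (m : ℕ) (I : Finset ℕ) (n : ℕ) : ℕ :=
  Set.ncard {v ∈ Seqs (I.sup id) n |
    Des (I.sup id) v = ↑(I.erase (I.sup id)) ∧ ∀ j ∈ Finset.Icc 1 n, mult (I.sup id) v j ≤ m}

/-- `b_i(I)`: the number of sequences `v = (v_1, …, v_{α_t})` with entries in `{1,…,i+1}`
such that `Des v = I \ {α_t}`, every number in `{2,…,i+1}` occurs in `v`, and `v_{α_t} ≠ 1`. -/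
noncomputable def bcoef (I : Finset ℕ) (i : ℕ) : ℕ :=
  Set.ncard {v ∈ Seqs (I.sup id) (i + 1) |
    Des (I.sup id) v = ↑(I.erase (I.sup id)) ∧
    (∀ l ∈ Finset.Icc 2 (i + 1), ∃ j ∈ Finset.Icc 1 (I.sup id), v j = l) ∧
    v (I.sup id) ≠ 1}

/-- `L(I)`: the length of the longest run of consecutive integers contained in `I`. -/
def longestRun (I : Finset ℕ) : ℕ :=
  I.sup fun a => ((Finset.Icc a (I.sup id)).filter fun b => Finset.Icc a b ⊆ I).card

/-- `alphaVal I k` is the `k`-th smallest element of `I` (`1`-indexed), with `alphaVal I 0 = 0`. -/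
def alphaVal (I : Finset ℕ) (k : ℕ) : ℕ :=
  if k = 0 then 0 else (I.sort (· ≤ ·)).getD (k - 1) 0

/-- For a composition `A = (a_1,…,a_s)` of `t = |I|`, `sigmaC I A i` is
`σ_{i+1} = β_{a_1+⋯+a_i+1} + ⋯ + β_{a_1+⋯+a_{i+1}}`, where `β` is the sequence of first
differences of `(0, α_1, …, α_t)`; by telescoping this equals
`α_{a_1+⋯+a_{i+1}} - α_{a_1+⋯+a_i}`. -/
def sigmaC (I : Finset ℕ) {t : ℕ} (A : Composition t) (i : ℕ) : ℕ :=
  alphaVal I (A.sizeUpTo (i + 1)) - alphaVal I (A.sizeUpTo i)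

/-- `C(A, I)` for a composition `A = (a_1,…,a_r)`: the number of sequences
`v = (v_1, …, v_{α_t})` with entries in `{1,…,r}` such that `Des v = I \ {α_t}`
and the number `j` appears exactly `a_j` times in `v`, for each `j ∈ {1,…,r}`. -/
noncomputable def Ccount (I : Finset ℕ) {N : ℕ} (A : Composition N) : ℕ :=
  Set.ncard {v ∈ Seqs (I.sup id) A.length |
    Des (I.sup id) v = ↑(I.erase (I.sup id)) ∧
    ∀ j ∈ Finset.Icc 1 A.length, mult (I.sup id) v j = A.blocks.getD (j - 1) 0}

/-- The generalized binomial coefficient `C(a, i) = a(a-1)⋯(a-i+1)/i!` for an integer `a`. -/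
def genChoose (a : ℤ) (i : ℕ) : ℚ :=
  (∏ j ∈ Finset.range i, ((a : ℚ) - (j : ℚ))) / (Nat.factorial i)
namespace Stmt6Aux

lemma mem_Des {ℓ i : ℕ} {v : ℕ → ℕ} : i ∈ Des ℓ v ↔ 1 ≤ i ∧ i < ℓ ∧ v (i+1) < v i := Iff.rfl

lemma seqs_finite (ℓ n : ℕ) : (Seqs ℓ n).Finite := by
  have hsub : Seqs ℓ n ⊆
      (fun g : Fin ℓ → Fin (n+1) => fun i : ℕ =>
        if h : 1 ≤ i ∧ i ≤ ℓ then (g ⟨i-1, by omega⟩ : ℕ) else 0) '' Set.univ := by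
    intro v hv
    obtain ⟨hv1, hv2⟩ := hv
    refine ⟨fun i => ⟨v (i+1), ?_⟩, trivial, ?_⟩
    · have := hv1 (i+1) (by simp [Finset.mem_Icc])
      simp [Finset.mem_Icc] at this; omega
    · funext i
      show (if h : 1 ≤ i ∧ i ≤ ℓ then v ((i-1)+1) else 0) = v i
      by_cases h : 1 ≤ i ∧ i ≤ ℓ
      · rw [dif_pos h, show i - 1 + 1 = i by omega]
      · rw [dif_neg h, hv2 i (by simp [Finset.mem_Icc]; omega)]
  exact Set.Finite.subset ((Set.finite_univ).image _) hsub

lemma filter_Ioc_card (a L : ℕ) (P : ℕ → Prop) [DecidablePred P] :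
    ((Finset.Ioc a L).filter P).card = ((Finset.Icc 1 (L-a)).filter fun p => P (a+p)).card := by
  by_cases h : a ≤ L
  · have h1 : (Finset.Ioc a L) = (Finset.Icc 1 (L-a)).map (addLeftEmbedding a) := by
      rw [Finset.map_add_left_Icc]
      rw [show a + (L - a) = L by omega, Finset.Icc_add_one_left_eq_Ioc]
    rw [h1, Finset.filter_map, Finset.card_map]
    rfl
  · rw [Finset.Ioc_eq_empty (by omega), show L - a = 0 by omega]
    simp

lemma mult_split (a L : ℕ) (ha : 1 ≤ a) (h : a ≤ L) (w : ℕ → ℕ) (j : ℕ) :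
    mult L w j = mult a w j + ((Finset.Icc 1 (L - a)).filter fun p => w (a + p) = j).card := by
  unfold mult
  rw [show Finset.Icc 1 L = Finset.Icc 1 a ∪ Finset.Ioc a L by
    ext x; simp [Finset.mem_Icc, Finset.mem_Ioc]; omega]
  rw [Finset.filter_union, Finset.card_union_of_disjoint, filter_Ioc_card]
  exact Finset.disjoint_filter_filter (by
    simp [Finset.disjoint_left, Finset.mem_Icc, Finset.mem_Ioc]; omega)

lemma sum_mult (a n : ℕ) (v : ℕ → ℕ) (hv : ∀ i ∈ Finset.Icc 1 a, v i ∈ Finset.Icc 1 n) :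
    ∑ j ∈ Finset.Icc 1 n, mult a v j = a := by
  unfold mult
  rw [← Finset.card_eq_sum_card_fiberwise (fun x hx => hv x hx)]
  simp

/-- Cumulative deficit function. -/
def F (n m : ℕ) (c : ℕ → ℕ) (j : ℕ) : ℕ := ∑ l ∈ Finset.Icc 1 (min j n), (m - c l)

/-- `g p` = value at position `p` of the sorted deficit sequence. -/
noncomputable def g (n m : ℕ) (c : ℕ → ℕ) (p : ℕ) : ℕ := sInf {j | p ≤ F n m c j}

lemma F_zero (n m : ℕ) (c : ℕ → ℕ) : F n m c 0 = 0 := by simp [F]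

lemma F_mono (n m : ℕ) (c : ℕ → ℕ) : Monotone (F n m c) := fun j j' h =>
  Finset.sum_le_sum_of_subset (Finset.Icc_subset_Icc le_rfl (by omega))

lemma F_succ (n m : ℕ) (c : ℕ → ℕ) {j : ℕ} (hj : 1 ≤ j) (hjn : j ≤ n) :
    F n m c j = F n m c (j-1) + (m - c j) := by
  unfold F
  rw [show min j n = j by omega, show min (j-1) n = j - 1 by omega]
  rw [show Finset.Icc 1 j = insert j (Finset.Icc 1 (j-1)) by
    ext x; simp [Finset.mem_Icc]; omega]
  rw [Finset.sum_insert (by simp [Finset.mem_Icc]; omega), add_comm]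

lemma g_spec (n m : ℕ) (c : ℕ → ℕ) {p : ℕ} (hp1 : 1 ≤ p) (hpK : p ≤ F n m c n) :
    1 ≤ g n m c p ∧ g n m c p ≤ n ∧ p ≤ F n m c (g n m c p) ∧ F n m c (g n m c p - 1) < p := by
  have hne : (({j | p ≤ F n m c j}) : Set ℕ).Nonempty := ⟨n, hpK⟩
  have hmem : p ≤ F n m c (g n m c p) := Nat.sInf_mem hne
  have hle : g n m c p ≤ n := Nat.sInf_le hpK
  have h1 : 1 ≤ g n m c p := by
    rcases Nat.eq_zero_or_pos (g n m c p) with h | h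
    · rw [h, F_zero] at hmem; omega
    · omega
  refine ⟨h1, hle, hmem, ?_⟩
  have hnm : ¬ p ≤ F n m c (g n m c p - 1) := by
    intro hcc
    have h2 : g n m c p ≤ g n m c p - 1 := Nat.sInf_le hcc
    omega
  omega

lemma g_eq_iff (n m : ℕ) (c : ℕ → ℕ) {p j : ℕ} (hp1 : 1 ≤ p) (hpK : p ≤ F n m c n)
    (hj1 : 1 ≤ j) :
    g n m c p = j ↔ F n m c (j-1) < p ∧ p ≤ F n m c j := by
  constructor
  · rintro rfl
    exact ⟨(g_spec n m c hp1 hpK).2.2.2, (g_spec n m c hp1 hpK).2.2.1⟩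
  · rintro ⟨h1, h2⟩
    have hle : g n m c p ≤ j := Nat.sInf_le h2
    have hgt : j - 1 < g n m c p := by
      by_contra hcon
      have : F n m c (g n m c p) ≤ F n m c (j-1) := F_mono n m c (by omega)
      have := (g_spec n m c hp1 hpK).2.2.1
      omega
    omega

lemma g_mono (n m : ℕ) (c : ℕ → ℕ) {p q : ℕ} (hp1 : 1 ≤ p) (hpq : p ≤ q)
    (hqK : q ≤ F n m c n) : g n m c p ≤ g n m c q :=
  Nat.sInf_le (le_trans hpq (g_spec n m c (by omega) hqK).2.2.1)

lemma g_count (n m : ℕ) (c : ℕ → ℕ) {j : ℕ} (hj1 : 1 ≤ j) (hjn : j ≤ n) (hcj : c j ≤ m) :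
    ((Finset.Icc 1 (F n m c n)).filter fun p => g n m c p = j).card = m - c j := by
  have hFj : F n m c j ≤ F n m c n := F_mono n m c hjn
  have hset : ((Finset.Icc 1 (F n m c n)).filter fun p => g n m c p = j)
      = Finset.Ioc (F n m c (j-1)) (F n m c j) := by
    ext p
    simp only [Finset.mem_filter, Finset.mem_Icc, Finset.mem_Ioc]
    constructor
    · rintro ⟨⟨hp1, hpK⟩, hg⟩
      exact (g_eq_iff n m c hp1 hpK hj1).1 hg
    · rintro ⟨h1, h2⟩
      have hp1 : 1 ≤ p := by omega
      have hpK : p ≤ F n m c n := le_trans h2 hFj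
      exact ⟨⟨hp1, hpK⟩, (g_eq_iff n m c hp1 hpK hj1).2 ⟨h1, h2⟩⟩
  rw [hset, Nat.card_Ioc, F_succ n m c hj1 hjn]
  omega

lemma g_uniq (n m : ℕ) (c h : ℕ → ℕ) (hc : ∀ j, 1 ≤ j → j ≤ n → c j ≤ m)
    (K : ℕ) (hK : K = F n m c n)
    (hh1 : ∀ p, 1 ≤ p → p ≤ K → 1 ≤ h p ∧ h p ≤ n)
    (hh2 : ∀ p q, 1 ≤ p → p ≤ q → q ≤ K → h p ≤ h q)
    (hh3 : ∀ j, 1 ≤ j → j ≤ n → ((Finset.Icc 1 K).filter fun p => h p = j).card = m - c j)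
    (p : ℕ) (hp1 : 1 ≤ p) (hpK : p ≤ K) : h p = g n m c p := by
  have hS : ∀ j, j ≤ n → ((Finset.Icc 1 K).filter fun q => h q ≤ j).card = F n m c j := by
    intro j hj
    rw [Finset.card_eq_sum_card_fiberwise (f := h) (t := Finset.Icc 1 j)
      (fun x hx => by
        simp only [Finset.mem_coe, Finset.mem_filter, Finset.mem_Icc] at hx ⊢
        exact ⟨(hh1 x hx.1.1 hx.1.2).1, hx.2⟩)]
    have : ∀ l ∈ Finset.Icc 1 j,
        (((Finset.Icc 1 K).filter fun q => h q ≤ j).filter fun q => h q = l).card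
          = m - c l := by
      intro l hl
      simp only [Finset.mem_Icc] at hl
      rw [Finset.filter_filter]
      rw [Finset.filter_congr (q := fun q => h q = l)
        (fun q _ => by constructor
                       · exact fun hx => hx.2
                       · exact fun hx => ⟨by omega, hx⟩)]
      exact hh3 l hl.1 (le_trans hl.2 hj)
    rw [Finset.sum_congr rfl this]
    unfold F
    rw [show min j n = j by omega]
  have hdown : ∀ j, j ≤ n → ((Finset.Icc 1 K).filter fun q => h q ≤ j)
      = Finset.Icc 1 (F n m c j) := by
    intro j hj
    have hFK : F n m c j ≤ K := hK ▸ F_mono n m c hj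
    ext q
    simp only [Finset.mem_filter, Finset.mem_Icc]
    constructor
    · rintro ⟨⟨hq1, hqK⟩, hqj⟩
      refine ⟨hq1, ?_⟩
      have hsub : Finset.Icc 1 q ⊆ (Finset.Icc 1 K).filter fun r => h r ≤ j := by
        intro r hr
        simp only [Finset.mem_Icc] at hr
        simp only [Finset.mem_filter, Finset.mem_Icc]
        exact ⟨⟨hr.1, le_trans hr.2 hqK⟩, le_trans (hh2 r q hr.1 hr.2 hqK) hqj⟩
      calc q = (Finset.Icc 1 q).card := by simp
        _ ≤ _ := Finset.card_le_card hsub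
        _ = F n m c j := hS j hj
    · rintro ⟨hq1, hqF⟩
      refine ⟨⟨hq1, le_trans hqF hFK⟩, ?_⟩
      by_contra hcon
      have hsub : ((Finset.Icc 1 K).filter fun r => h r ≤ j) ⊆ Finset.Icc 1 (q-1) := by
        intro r hr
        simp only [Finset.mem_filter, Finset.mem_Icc] at hr ⊢
        refine ⟨hr.1.1, ?_⟩
        by_contra hrq
        exact hcon (le_trans (hh2 q r hq1 (by omega) hr.1.2) hr.2)
      have hcard := Finset.card_le_card hsub
      rw [hS j hj, Nat.card_Icc] at hcard
      omega
  have hj1 := (hh1 p hp1 hpK).1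
  have hjn := (hh1 p hp1 hpK).2
  symm
  rw [g_eq_iff n m c hp1 (hK ▸ hpK) hj1]
  constructor
  · by_contra hle
    have hmem : p ∈ Finset.Icc 1 (F n m c (h p - 1)) := by
      simp only [Finset.mem_Icc]; omega
    rw [← hdown (h p - 1) (by omega)] at hmem
    simp only [Finset.mem_filter, Finset.mem_Icc] at hmem
    omega
  · have hmem : p ∈ (Finset.Icc 1 K).filter fun q => h q ≤ h p := by
      simp only [Finset.mem_filter, Finset.mem_Icc]
      exact ⟨⟨hp1, hpK⟩, le_rfl⟩
    rw [hdown (h p) hjn] at hmem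
    simp only [Finset.mem_Icc] at hmem
    exact hmem.2

end Stmt6Aux

namespace Stmt6Aux

lemma F_top (a n m : ℕ) (v : ℕ → ℕ) (hv : ∀ i ∈ Finset.Icc 1 a, v i ∈ Finset.Icc 1 n)
    (hmult : ∀ j ∈ Finset.Icc 1 n, mult a v j ≤ m) (haL : a ≤ n * m) :
    F n m (mult a v) n = n * m - a := by
  have hsum := sum_mult a n v hv
  have key : F n m (mult a v) n + ∑ j ∈ Finset.Icc 1 n, mult a v j = n * m := by
    unfold F
    rw [min_self, ← Finset.sum_add_distrib]
    rw [Finset.sum_congr rfl (fun j hj => Nat.sub_add_cancel (hmult j hj))]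
    simp [Finset.sum_const, Nat.card_Icc, mul_comm]
  omega

/-- Extension of `v` (length `a`) to length `L` by appending remaining letters sorted. -/
noncomputable def Ext (a L n m : ℕ) (v : ℕ → ℕ) : ℕ → ℕ :=
  fun i => if i ≤ a then v i else if i ≤ L then g n m (mult a v) (i - a) else 0

/-- Truncation to length `a`. -/
def Trunc (a : ℕ) (w : ℕ → ℕ) : ℕ → ℕ := fun i => if i ≤ a then w i else 0

lemma ext_main (a L n m : ℕ) (v : ℕ → ℕ) (I : Finset ℕ)
    (ha1 : 1 ≤ a) (haL : a ≤ L) (hL : L = n * m)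
    (haI : a ∈ I)
    (hv : v ∈ Seqs a n) (hDes : Des a v = ↑(I.erase a))
    (hmult : ∀ j ∈ Finset.Icc 1 n, mult a v j ≤ m) :
    Ext a L n m v ∈ Seqs L n ∧
    (Des L (Ext a L n m v) = ↑I ∨ Des L (Ext a L n m v) = ↑(I.erase a)) ∧
    (∀ j ∈ Finset.Icc 1 n, mult L (Ext a L n m v) j = m) ∧
    Trunc a (Ext a L n m v) = v := by
  obtain ⟨hv1, hv2⟩ := hv
  set c := mult a v with hc
  have hFn : F n m c n = L - a := by rw [hc, F_top a n m v hv1 hmult (hL ▸ haL), hL]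
  set w := Ext a L n m v with hw
  have hwpre : ∀ i, i ≤ a → w i = v i := by
    intro i hi; simp [hw, Ext, hi]
  have hwtail : ∀ p, 1 ≤ p → p ≤ L - a → w (a + p) = g n m c p := by
    intro p hp1 hp2
    have h1 : ¬ (a + p ≤ a) := by omega
    have h2 : a + p ≤ L := by omega
    simp [hw, Ext, h1, h2, ← hc]
  have hgspec : ∀ p, 1 ≤ p → p ≤ L - a →
      1 ≤ g n m c p ∧ g n m c p ≤ n ∧ p ≤ F n m c (g n m c p) ∧ F n m c (g n m c p - 1) < p :=
    fun p hp1 hp2 => g_spec n m c hp1 (by omega)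
  have hseqs : w ∈ Seqs L n := by
    constructor
    · intro i hi
      simp only [Finset.mem_Icc] at hi
      by_cases h : i ≤ a
      · rw [hwpre i h]; exact hv1 i (by simp [Finset.mem_Icc]; omega)
      · have : i = a + (i - a) := by omega
        rw [this, hwtail (i-a) (by omega) (by omega)]
        have := hgspec (i-a) (by omega) (by omega)
        simp [Finset.mem_Icc]; omega
    · intro i hi
      simp only [Finset.mem_Icc] at hi
      by_cases h : i ≤ a
      · rw [hwpre i h]; exact hv2 i (by simp [Finset.mem_Icc]; omega)
      · simp [hw, Ext, h, show ¬ (i ≤ L) by omega]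
  have hmultw : ∀ j ∈ Finset.Icc 1 n, mult L w j = m := by
    intro j hj
    simp only [Finset.mem_Icc] at hj
    rw [mult_split a L ha1 haL]
    have h1 : mult a w j = mult a v j := by
      unfold mult
      exact congrArg Finset.card (Finset.filter_congr (fun i hi => by
        simp only [Finset.mem_Icc] at hi
        rw [hwpre i hi.2]))
    have h2 : ((Finset.Icc 1 (L - a)).filter fun p => w (a + p) = j).card
        = ((Finset.Icc 1 (L - a)).filter fun p => g n m c p = j).card := by
      exact congrArg Finset.card (Finset.filter_congr (fun p hp => by
        simp only [Finset.mem_Icc] at hp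
        rw [hwtail p hp.1 hp.2]))
    have h3 : c j ≤ m := by rw [hc]; exact hmult j (by simp [Finset.mem_Icc]; omega)
    rw [h1, h2, ← hFn, g_count n m c hj.1 hj.2 h3, ← hc]
    omega
  have hchar : ∀ i, i ∈ Des L w ↔
      (i ∈ I.erase a ∨ (i = a ∧ a < L ∧ g n m c 1 < v a)) := by
    intro i
    constructor
    · rintro ⟨hi1, hiL, hdesc⟩
      rcases lt_trichotomy i a with h | h | h
      · left
        have : i ∈ Des a v := by
          refine ⟨hi1, h, ?_⟩
          rw [← hwpre i (by omega), ← hwpre (i+1) (by omega)]; exact hdesc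
        rw [hDes] at this
        exact this
      · right
        subst h
        refine ⟨rfl, hiL, ?_⟩
        rw [hwpre i le_rfl] at hdesc
        rw [hwtail 1 le_rfl (by omega)] at hdesc
        exact hdesc
      · exfalso
        rw [show i = a + (i - a) by omega, hwtail (i-a) (by omega) (by omega)] at hdesc
        rw [show a + (i-a) + 1 = a + (i - a + 1) by omega,
          hwtail (i-a+1) (by omega) (by omega)] at hdesc
        exact absurd (g_mono n m c (by omega) (by omega : i - a ≤ i - a + 1) (by omega)) (by omega)
    · rintro (hi | ⟨hia, haL', hlt⟩)
      · have hmem : i ∈ Des a v := by rw [hDes]; exact hi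
        obtain ⟨h1, h2, h3⟩ := hmem
        refine ⟨h1, by omega, ?_⟩
        rw [hwpre i (by omega), hwpre (i+1) (by omega)]
        exact h3
      · refine ⟨by omega, by omega, ?_⟩
        rw [hia, hwpre a le_rfl, hwtail 1 le_rfl (by omega)]
        exact hlt
  refine ⟨hseqs, ?_, hmultw, ?_⟩
  · by_cases hC : a < L ∧ g n m c 1 < v a
    · left
      ext i
      rw [hchar i]
      simp only [Finset.coe_insert, Set.mem_insert_iff, Finset.mem_coe]
      constructor
      · rintro (h | ⟨hia, _⟩)
        · exact Finset.mem_of_mem_erase h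
        · rw [hia]; exact haI
      · intro h
        by_cases hia : i = a
        · right; exact ⟨hia, hC⟩
        · left; exact Finset.mem_erase.mpr ⟨hia, h⟩
    · right
      ext i
      rw [hchar i]
      simp only [Finset.mem_coe]
      constructor
      · rintro (h | ⟨hia, h2, h3⟩)
        · exact h
        · exact absurd ⟨h2, h3⟩ hC
      · intro h; left; exact h
  · funext i
    by_cases h : i ≤ a
    · simp only [Trunc, if_pos h]; exact hwpre i h
    · simp only [Trunc, if_neg h]
      exact (hv2 i (by simp [Finset.mem_Icc]; omega)).symm

end Stmt6Aux

namespace Stmt6Aux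

lemma trunc_main (a L n m : ℕ) (w : ℕ → ℕ) (I : Finset ℕ)
    (ha1 : 1 ≤ a) (haL : a ≤ L) (hL : L = n * m)
    (hIle : ∀ x ∈ I, x ≤ a)
    (hw : w ∈ Seqs L n)
    (hDes : Des L w = ↑I ∨ Des L w = ↑(I.erase a))
    (hmultw : ∀ j ∈ Finset.Icc 1 n, mult L w j = m) :
    Trunc a w ∈ Seqs a n ∧ Des a (Trunc a w) = ↑(I.erase a) ∧
    (∀ j ∈ Finset.Icc 1 n, mult a (Trunc a w) j ≤ m) ∧
    Ext a L n m (Trunc a w) = w := by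
  obtain ⟨hw1, hw2⟩ := hw
  set v := Trunc a w with hvdef
  have hvw : ∀ i, i ≤ a → v i = w i := by intro i hi; simp [hvdef, Trunc, hi]
  have hmultvw : ∀ j, mult a v j = mult a w j := by
    intro j
    exact congrArg Finset.card (Finset.filter_congr (fun i hi => by
      simp only [Finset.mem_Icc] at hi
      rw [hvw i hi.2]))
  have hmultle : ∀ j, mult a w j ≤ m := by
    intro j
    by_cases hj : 1 ≤ j ∧ j ≤ n
    · calc mult a w j ≤ mult L w j :=
        Finset.card_le_card (Finset.filter_subset_filter _ (Finset.Icc_subset_Icc le_rfl haL))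
      _ = m := hmultw j (by simp [Finset.mem_Icc]; omega)
    · -- j = 0 or j > n: no occurrences
      have : mult a w j = 0 := by
        unfold mult
        rw [Finset.card_eq_zero, Finset.filter_eq_empty_iff]
        intro i hi
        have := hw1 i (Finset.Icc_subset_Icc le_rfl haL hi)
        simp only [Finset.mem_Icc] at this
        omega
      omega
  have hvseqs : v ∈ Seqs a n := by
    constructor
    · intro i hi
      simp only [Finset.mem_Icc] at hi
      rw [hvw i hi.2]
      exact hw1 i (by simp [Finset.mem_Icc]; omega)
    · intro i hi
      simp only [Finset.mem_Icc] at hi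
      by_cases h : i ≤ a
      · rw [hvw i h]; exact hw2 i (by simp [Finset.mem_Icc]; omega)
      · simp [hvdef, Trunc, h]
  have hnotmem : ∀ i, a < i → i ∉ Des L w := by
    intro i hi hmem
    rcases hDes with h | h
    · rw [h] at hmem
      exact absurd (hIle i hmem) (by omega)
    · rw [h] at hmem
      exact absurd (hIle i (Finset.mem_of_mem_erase hmem)) (by omega)
  have hnodesc : ∀ i, a < i → i < L → w i ≤ w (i + 1) := by
    intro i h1 h2
    by_contra hcon
    exact hnotmem i h1 ⟨by omega, h2, by omega⟩
  have hdes : Des a v = ↑(I.erase a) := by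
    ext i
    have hiff : i ∈ Des a v ↔ (1 ≤ i ∧ i < a ∧ w (i+1) < w i) := by
      constructor
      · rintro ⟨h1, h2, h3⟩
        rw [hvw i (by omega), hvw (i+1) (by omega)] at h3
        exact ⟨h1, h2, h3⟩
      · rintro ⟨h1, h2, h3⟩
        refine ⟨h1, h2, ?_⟩
        rw [hvw i (by omega), hvw (i+1) (by omega)]
        exact h3
    rw [hiff]
    rcases hDes with h | h
    · constructor
      · rintro ⟨h1, h2, h3⟩
        have : i ∈ Des L w := ⟨h1, by omega, h3⟩
        rw [h] at this
        exact Finset.mem_coe.mpr (Finset.mem_erase.mpr ⟨by omega, this⟩)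
      · intro hi
        have hi' : i ∈ (I : Set ℕ) := Finset.mem_coe.mpr
          (Finset.mem_of_mem_erase (Finset.mem_coe.mp hi))
        rw [← h] at hi'
        obtain ⟨h1, h2, h3⟩ := hi'
        have hine : i ≠ a := Finset.ne_of_mem_erase (Finset.mem_coe.mp hi)
        have hile : i ≤ a := hIle i (Finset.mem_of_mem_erase (Finset.mem_coe.mp hi))
        exact ⟨h1, by omega, h3⟩
    · constructor
      · rintro ⟨h1, h2, h3⟩
        have : i ∈ Des L w := ⟨h1, by omega, h3⟩
        rw [h] at this
        exact this
      · intro hi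
        have hi' : i ∈ Des L w := by rw [h]; exact hi
        obtain ⟨h1, h2, h3⟩ := hi'
        have hine : i ≠ a := Finset.ne_of_mem_erase (Finset.mem_coe.mp hi)
        have hile : i ≤ a := hIle i (Finset.mem_of_mem_erase (Finset.mem_coe.mp hi))
        exact ⟨h1, by omega, h3⟩
  refine ⟨hvseqs, hdes, fun j hj => by rw [hmultvw j]; exact hmultle j, ?_⟩
  -- Ext v = w
  have hFn : F n m (mult a v) n = L - a := by
    rw [F_top a n m v hvseqs.1 (fun j hj => by rw [hmultvw j]; exact hmultle j) (hL ▸ haL), hL]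
  have htail : ∀ p, 1 ≤ p → p ≤ L - a → w (a + p) = g n m (mult a v) p := by
    have hmono : ∀ d p, 1 ≤ p → p + d ≤ L - a → w (a + p) ≤ w (a + (p + d)) := by
      intro d
      induction d with
      | zero => intro p _ _; simp
      | succ d ih =>
        intro p hp1 hpd
        calc w (a + p) ≤ w (a + (p + d)) := ih p hp1 (by omega)
          _ ≤ w (a + (p + d) + 1) := hnodesc (a + (p+d)) (by omega) (by omega)
          _ = w (a + (p + (d+1))) := by ring_nf
    refine fun p hp1 hp2 => g_uniq n m (mult a v) (fun p => w (a + p))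
      (fun j hj1 hjn => by rw [hmultvw j]; exact hmultle j)
      (L - a) hFn.symm ?_ ?_ ?_ p hp1 hp2
    · intro p hp1 hpK
      have hb := hw1 (a + p) (by simp [Finset.mem_Icc]; omega)
      simp only [Finset.mem_Icc] at hb
      exact hb
    · intro p q hp1 hpq hqK
      have := hmono (q - p) p hp1 (by omega)
      rwa [show p + (q - p) = q by omega] at this
    · intro j hj1 hjn
      have hsplit := mult_split a L ha1 haL w j
      have h5 := hmultw j (by simp [Finset.mem_Icc]; omega)
      have h6 := hmultle j
      rw [hmultvw j]
      have h4 : ((Finset.Icc 1 (L-a)).filter fun p => w (a + p) = j).card = m - mult a w j := by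
        omega
      exact h4
  funext i
  by_cases h1 : i ≤ a
  · simp only [Ext, if_pos h1]
    exact hvw i h1
  · by_cases h2 : i ≤ L
    · simp only [Ext, if_neg h1, if_pos h2]
      rw [← htail (i - a) (by omega) (by omega), show a + (i - a) = i by omega]
    · simp only [Ext, if_neg h1, if_neg h2]
      exact (hw2 i (by simp [Finset.mem_Icc]; omega)).symm

end Stmt6Aux

open Stmt6Aux in
/-- for every positive integer `m` and every `n ≥ α_t`,
`D^m(I,n) = 𝔡^m(I,n) + 𝔡^m(I \ {α_t}, n)`. -/
theorem stmt_6 (I : Finset ℕ) (hI : I.Nonempty) (hIpos : ∀ x ∈ I, 1 ≤ x)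
    (m : ℕ) (hm : 1 ≤ m) (n : ℕ) (hn : I.sup id ≤ n) :
    Dcount m I n = dP m I n + dP m (I.erase (I.sup id)) n := by
  classical
  set a := I.sup id with ha
  set L := n * m with hLdef
  have haI : a ∈ I := by
    obtain ⟨x, hx, he⟩ := Finset.exists_mem_eq_sup I hI id
    rw [ha, he]; exact hx
  have ha1 : 1 ≤ a := hIpos a haI
  have hIle : ∀ x ∈ I, x ≤ a := fun x hx => Finset.le_sup (f := id) hx
  have haL : a ≤ L := le_trans hn (by calc n = n * 1 := (mul_one n).symm
    _ ≤ n * m := Nat.mul_le_mul_left n hm)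
  set V := {v ∈ Seqs a n | Des a v = ↑(I.erase a) ∧
    ∀ j ∈ Finset.Icc 1 n, mult a v j ≤ m} with hV
  set A := {w ∈ Seqs L n | Des L w = ↑I ∧
    ∀ j ∈ Finset.Icc 1 n, mult L w j = m} with hA
  set B := {w ∈ Seqs L n | Des L w = ↑(I.erase a) ∧
    ∀ j ∈ Finset.Icc 1 n, mult L w j = m} with hB
  have hDc : Dcount m I n = V.ncard := rfl
  have hdPA : dP m I n = A.ncard := rfl
  have hdPB : dP m (I.erase a) n = B.ncard := rfl
  have hbij : Set.BijOn (Trunc a) (A ∪ B) V := by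
    refine ⟨?_, ?_, ?_⟩
    · -- MapsTo
      rintro w hw
      have hw' : w ∈ Seqs L n ∧ (Des L w = ↑I ∨ Des L w = ↑(I.erase a)) ∧
          ∀ j ∈ Finset.Icc 1 n, mult L w j = m := by
        rcases hw with h | h
        · exact ⟨h.1, Or.inl h.2.1, h.2.2⟩
        · exact ⟨h.1, Or.inr h.2.1, h.2.2⟩
      obtain ⟨h1, h2, h3, _⟩ := trunc_main a L n m w I ha1 haL hLdef hIle hw'.1 hw'.2.1 hw'.2.2
      exact ⟨h1, h2, h3⟩
    · -- InjOn
      rintro w hw w' hw' heq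
      have hw1 : w ∈ Seqs L n ∧ (Des L w = ↑I ∨ Des L w = ↑(I.erase a)) ∧
          ∀ j ∈ Finset.Icc 1 n, mult L w j = m := by
        rcases hw with h | h
        · exact ⟨h.1, Or.inl h.2.1, h.2.2⟩
        · exact ⟨h.1, Or.inr h.2.1, h.2.2⟩
      have hw2 : w' ∈ Seqs L n ∧ (Des L w' = ↑I ∨ Des L w' = ↑(I.erase a)) ∧
          ∀ j ∈ Finset.Icc 1 n, mult L w' j = m := by
        rcases hw' with h | h
        · exact ⟨h.1, Or.inl h.2.1, h.2.2⟩
        · exact ⟨h.1, Or.inr h.2.1, h.2.2⟩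
      have e1 := (trunc_main a L n m w I ha1 haL hLdef hIle hw1.1 hw1.2.1 hw1.2.2).2.2.2
      have e2 := (trunc_main a L n m w' I ha1 haL hLdef hIle hw2.1 hw2.2.1 hw2.2.2).2.2.2
      rw [← e1, ← e2, heq]
    · -- SurjOn
      rintro v ⟨hv1, hv2, hv3⟩
      obtain ⟨h1, h2, h3, h4⟩ := ext_main a L n m v I ha1 haL hLdef haI hv1 hv2 hv3
      refine ⟨Ext a L n m v, ?_, h4⟩
      rcases h2 with h | h
      · left; exact ⟨h1, h, h3⟩
      · right; exact ⟨h1, h, h3⟩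
  have hAfin : A.Finite := Set.Finite.subset (seqs_finite L n) (fun x hx => hx.1)
  have hBfin : B.Finite := Set.Finite.subset (seqs_finite L n) (fun x hx => hx.1)
  have hdisj : Disjoint A B := by
    rw [Set.disjoint_left]
    rintro w ⟨_, hwA, _⟩ ⟨_, hwB, _⟩
    have : (I : Set ℕ) = ↑(I.erase a) := by rw [← hwA, hwB]
    have : I = I.erase a := Finset.coe_injective this
    exact absurd (this ▸ haI) (Finset.notMem_erase a I)
  rw [hDc, hdPA, hdPB, ← hbij.image_eq, Set.ncard_image_of_injOn hbij.injOn,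
    Set.ncard_union_eq hdisj hAfin hBfin]
end

section
/- For every positive integer m, there exists a polynomial p with rational coefficients such that 𝔡^m(I,n) = p(n) for every integer n ≥ α_t. -/
open Finset

section Aux
open Classical List

/-- Finset of functions `ℕ → β` with values in `t` on `s` and equal to `z` off `s`. -/
noncomputable def funFinset {β : Type*} (s : Finset ℕ) (t : Finset β) (z : β) :
    Finset (ℕ → β) :=
  letI := Classical.decEq β
  (s.pi fun _ => t).image fun f i => if h : i ∈ s then f i h else z

lemma mem_funFinset {β : Type*} {s : Finset ℕ} {t : Finset β} {z : β} {f : ℕ → β} :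
    f ∈ funFinset s t z ↔ (∀ i ∈ s, f i ∈ t) ∧ ∀ i ∉ s, f i = z := by
  classical
  constructor
  · intro h
    simp only [funFinset, mem_image] at h
    obtain ⟨g, hg, rfl⟩ := h
    rw [Finset.mem_pi] at hg
    constructor
    · intro i hi; simpa [hi] using hg i hi
    · intro i hi; simp [hi]
  · rintro ⟨h1, h2⟩
    simp only [funFinset, mem_image]
    refine ⟨fun i _ => f i, Finset.mem_pi.2 fun i hi => h1 i hi, ?_⟩
    funext i
    by_cases hi : i ∈ s <;> simp [hi, h2]

/-- telescoping sums of differences of a monotone `f` with `f 0 = 0`. -/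
lemma tele_sum {f : ℕ → ℕ} (hf : Monotone f) (h0 : f 0 = 0) (k : ℕ) :
    ∑ c ∈ range k, (f (c + 1) - f c) = f k := by
  induction k with
  | zero => simp [h0]
  | succ k ih =>
    rw [Finset.sum_range_succ, ih]
    have := hf (by omega : k ≤ k + 1)
    omega

/-! ### alphaVal facts -/

lemma alphaVal_zero (J : Finset ℕ) : alphaVal J 0 = 0 := rfl

lemma alphaVal_mem {J : Finset ℕ} {c : ℕ} (h1 : 1 ≤ c) (h2 : c ≤ J.card) :
    alphaVal J c ∈ J := by
  have hlen : c - 1 < (J.sort (· ≤ ·)).length := by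
    rw [Finset.length_sort]; omega
  rw [alphaVal, if_neg (by omega), List.getD_eq_getElem _ _ hlen]
  exact (Finset.mem_sort _).1 (List.getElem_mem _)

lemma alphaVal_strictMonoOn {J : Finset ℕ} (hpos : ∀ x ∈ J, 1 ≤ x) {c c' : ℕ}
    (h1 : c < c') (h2 : c' ≤ J.card) : alphaVal J c < alphaVal J c' := by
  rcases Nat.eq_zero_or_pos c with rfl | hc
  · have := hpos _ (alphaVal_mem (by omega) h2)
    rw [alphaVal_zero]; omega
  · have hlen : ∀ {d : ℕ}, 1 ≤ d → d ≤ J.card → d - 1 < (J.sort (· ≤ ·)).length := by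
      intro d hd1 hd2; rw [Finset.length_sort]; omega
    have l1 := hlen hc (by omega)
    have l2 := hlen (by omega) h2
    rw [alphaVal, if_neg (by omega), List.getD_eq_getElem _ _ l1,
      alphaVal, if_neg (by omega), List.getD_eq_getElem _ _ l2]
    have hs := (Finset.sortedLT_sort J).pairwise
    have := hs.rel_get_of_lt (a := ⟨c - 1, l1⟩) (b := ⟨c' - 1, l2⟩) (by simp; omega)
    simpa using this

lemma alphaVal_monotoneOn {J : Finset ℕ} (hpos : ∀ x ∈ J, 1 ≤ x) {c c' : ℕ}
    (h1 : c ≤ c') (h2 : c' ≤ J.card) : alphaVal J c ≤ alphaVal J c' := by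
  rcases eq_or_lt_of_le h1 with rfl | h
  · exact le_rfl
  · exact (alphaVal_strictMonoOn hpos h h2).le

lemma alphaVal_le_sup {J : Finset ℕ} {c : ℕ} (h2 : c ≤ J.card) :
    alphaVal J c ≤ J.sup id := by
  rcases Nat.eq_zero_or_pos c with rfl | hc
  · simp [alphaVal_zero]
  · exact Finset.le_sup (f := id) (alphaVal_mem hc h2)

lemma alphaVal_surj {J : Finset ℕ} {i : ℕ} (hi : i ∈ J) :
    ∃ c, 1 ≤ c ∧ c ≤ J.card ∧ alphaVal J c = i := by
  have : i ∈ J.sort (· ≤ ·) := (Finset.mem_sort _).2 hi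
  obtain ⟨k, hk, hki⟩ := List.getElem_of_mem this
  have hk' : k + 1 - 1 < (J.sort (· ≤ ·)).length := by simpa using hk
  refine ⟨k + 1, by omega, by rw [Finset.length_sort] at hk; omega, ?_⟩
  rw [alphaVal, if_neg (by omega), List.getD_eq_getElem _ _ hk']
  simpa using hki


/-! ### cut points -/

/-- cut points: `cutE J L c` is the `c`-th cut, `= α_c` for `c ≤ |J|`, else `L`. -/
def cutE (J : Finset ℕ) (L c : ℕ) : ℕ := if c ≤ J.card then alphaVal J c else L

section Cut

variable {J : Finset ℕ} {L : ℕ} (hpos : ∀ x ∈ J, 1 ≤ x)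
  (hβL : alphaVal J J.card ≤ L)

include hpos hβL

lemma cutE_zero : cutE J L 0 = 0 := by simp [cutE, alphaVal_zero]

lemma cutE_le : ∀ c, cutE J L c ≤ L := by
  intro c
  unfold cutE
  split
  · exact le_trans (alphaVal_monotoneOn hpos (by assumption) le_rfl) hβL
  · exact le_rfl

lemma cutE_mono : Monotone (cutE J L) := by
  intro c c' h
  unfold cutE
  by_cases h1 : c' ≤ J.card
  · rw [if_pos (le_trans h h1), if_pos h1]
    exact alphaVal_monotoneOn hpos h h1
  · rw [if_neg h1]
    split
    · exact le_trans (alphaVal_monotoneOn hpos (by assumption) le_rfl) hβL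
    · exact le_rfl

lemma cutE_strict {c c' : ℕ} (h : c < c') (h2 : c' ≤ J.card) :
    cutE J L c < cutE J L c' := by
  rw [cutE, if_pos (by omega), cutE, if_pos h2]
  exact alphaVal_strictMonoOn hpos h h2

lemma cutE_last : cutE J L (J.card + 1) = L := by rw [cutE, if_neg (by omega)]

lemma cutE_succ_mem {c : ℕ} (h : c + 1 ≤ J.card) : cutE J L (c + 1) ∈ J := by
  rw [cutE, if_pos h]; exact alphaVal_mem (by omega) h

/-- every position `1 ≤ i ≤ L` lies in some block. -/
lemma cutE_cover {i : ℕ} (h1 : 1 ≤ i) (h2 : i ≤ L) :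
    ∃ c, c ≤ J.card ∧ cutE J L c < i ∧ i ≤ cutE J L (c + 1) := by
  classical
  set S := (Finset.range (J.card + 1)).filter (fun c => cutE J L c < i) with hS
  have hmem : ∀ c, c ∈ S ↔ c < J.card + 1 ∧ cutE J L c < i := by
    intro c; rw [hS, Finset.mem_filter, Finset.mem_range]
  have h0 : (0 : ℕ) ∈ S := (hmem 0).2 ⟨by omega, by rw [cutE_zero hpos hβL]; omega⟩
  have hne : S.Nonempty := ⟨0, h0⟩
  have hm := (hmem _).1 (S.max'_mem hne)
  refine ⟨S.max' hne, by omega, hm.2, ?_⟩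
  by_cases hc : S.max' hne + 1 ≤ J.card
  · by_contra hlt
    push_neg at hlt
    have hin : S.max' hne + 1 ∈ S := (hmem _).2 ⟨by omega, hlt⟩
    have := S.le_max' _ hin
    omega
  · rw [cutE, if_neg (by omega)]
    exact h2

/-- an element of `J` inside a block boundary must be the right endpoint. -/
lemma cutE_interior {i c : ℕ} (hiJ : i ∈ J) (hcl : cutE J L c < i)
    (hcu : i ≤ cutE J L (c + 1)) : i = cutE J L (c + 1) := by
  obtain ⟨c'', h1, h2, h3⟩ := alphaVal_surj hiJ
  have hic : i = cutE J L c'' := by rw [cutE, if_pos h2, h3]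
  have hcc : c < c'' := by
    by_contra hle
    push_neg at hle
    have := cutE_mono hpos hβL hle
    omega
  have := cutE_mono hpos hβL (show c + 1 ≤ c'' by omega)
  omega

end Cut

/-! ### blocks as lists -/

/-- the list `[w (a+1), …, w b]`. -/
def blk (w : ℕ → ℕ) (a b : ℕ) : List ℕ := (List.range (b - a)).map fun k => w (a + 1 + k)

lemma blk_length (w : ℕ → ℕ) (a b : ℕ) : (blk w a b).length = b - a := by
  simp [blk]

lemma blk_getElem (w : ℕ → ℕ) (a b k : ℕ) (h : k < (blk w a b).length) :
    (blk w a b)[k] = w (a + 1 + k) := by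
  simp [blk]

lemma blk_count (w : ℕ → ℕ) (a j : ℕ) :
    ∀ b, a ≤ b → (blk w a b).count j = ((Ioc a b).filter fun i => w i = j).card := by
  refine Nat.le_induction ?_ ?_
  · simp [blk]
  · intro b hb ih
    have h1 : blk w a (b + 1) = blk w a b ++ [w (b + 1)] := by
      have h3 : b + 1 - a = (b - a) + 1 := by omega
      have h4 : a + 1 + (b - a) = b + 1 := by omega
      rw [blk, h3, List.range_succ, List.map_append, ← blk]
      simp [h4]
    have h2 : Ioc a (b + 1) = insert (b + 1) (Ioc a b) := by
      ext x; simp [Finset.mem_Ioc, Finset.mem_insert]; omega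
    have hcnt : List.count j [w (b + 1)] = if w (b + 1) = j then 1 else 0 := by
      by_cases hw : w (b + 1) = j <;> simp [List.count_cons, beq_iff_eq, hw]
    rw [h1, List.count_append, ih, h2, Finset.filter_insert, hcnt]
    by_cases hw : w (b + 1) = j
    · rw [if_pos hw, if_pos hw, Finset.card_insert_of_notMem (by simp [Finset.mem_Ioc])]
    · rw [if_neg hw, if_neg hw]; omega

lemma blk_get (w : ℕ → ℕ) (a b : ℕ) (k : Fin (blk w a b).length) :
    (blk w a b).get k = w (a + 1 + (k : ℕ)) := by
  rw [List.get_eq_getElem]; exact blk_getElem w a b k k.2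

lemma blk_sorted_of (w : ℕ → ℕ) (a b : ℕ)
    (h : ∀ i, a < i → i + 1 ≤ b → w i ≤ w (i + 1)) : (blk w a b).Pairwise (· ≤ ·) := by
  rw [← List.isChain_iff_pairwise, List.isChain_iff_getElem]
  intro k hk
  rw [blk_getElem, blk_getElem]
  rw [blk_length] at hk
  exact h (a + 1 + k) (by omega) (by omega)

lemma blk_sorted_step {w : ℕ → ℕ} {a b i : ℕ} (hs : (blk w a b).Pairwise (· ≤ ·))
    (h1 : a < i) (h2 : i + 1 ≤ b) : w i ≤ w (i + 1) := by
  rw [← List.isChain_iff_pairwise, List.isChain_iff_getElem] at hs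
  have hk : i - a - 1 + 1 < (blk w a b).length := by rw [blk_length]; omega
  have h0 := hs (i - a - 1) hk
  rw [blk_getElem, blk_getElem] at h0
  have h0' : w (a + 1 + (i - a - 1)) ≤ w (a + 1 + (i - a - 1 + 1)) := h0
  have e1 : a + 1 + (i - a - 1) = i := by omega
  have e2 : a + 1 + (i - a - 1 + 1) = i + 1 := by omega
  rwa [e1, e2] at h0'

lemma blk_ext {w w' : ℕ → ℕ} {a b : ℕ} (h : blk w a b = blk w' a b) {i : ℕ}
    (h1 : a < i) (h2 : i ≤ b) : w i = w' i := by
  have hl : i - a - 1 < (blk w a b).length := by rw [blk_length]; omega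
  have hl' : i - a - 1 < (blk w' a b).length := by rw [blk_length]; omega
  have hg := congrArg (fun l => l.getD (i - a - 1) 0) h
  simp only [List.getD_eq_getElem _ _ hl, List.getD_eq_getElem _ _ hl'] at hg
  rw [blk_getElem _ _ _ _ hl, blk_getElem _ _ _ _ hl'] at hg
  have e1 : a + 1 + (i - a - 1) = i := by omega
  rwa [e1] at hg

/-! ### canonical sorted lists from counts -/

/-- the weakly increasing list containing `f j` copies of each `j ∈ {1,…,n}`. -/
def cList (f : ℕ → ℕ) : ℕ → List ℕ
  | 0 => []
  | n + 1 => cList f n ++ List.replicate (f (n + 1)) (n + 1)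

lemma cList_mem {f : ℕ → ℕ} {x : ℕ} : ∀ {n}, x ∈ cList f n → 1 ≤ x ∧ x ≤ n := by
  intro n
  induction n with
  | zero => simp [cList]
  | succ n ih =>
    intro hx
    rw [cList, List.mem_append] at hx
    rcases hx with hx | hx
    · have := ih hx; omega
    · have := List.eq_of_mem_replicate hx; omega

lemma cList_count (f : ℕ → ℕ) (j : ℕ) :
    ∀ n, (cList f n).count j = if 1 ≤ j ∧ j ≤ n then f j else 0 := by
  intro n
  induction n with
  | zero => rw [cList]; simp only [List.count_nil]; rw [if_neg (by omega)]
  | succ n ih =>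
    rw [cList, List.count_append, ih, List.count_replicate]
    by_cases hj : j = n + 1
    · subst hj
      rw [if_neg (by omega), if_pos (show 1 ≤ n + 1 ∧ n + 1 ≤ n + 1 by omega)]
      simp
    · have hbeq : ¬ ((n + 1 : ℕ) == j) = true := by simp [beq_iff_eq]; omega
      rw [if_neg hbeq]
      by_cases h2 : 1 ≤ j ∧ j ≤ n
      · rw [if_pos h2, if_pos (by omega)]; omega
      · rw [if_neg h2, if_neg (by omega)]

lemma cList_length (f : ℕ → ℕ) : ∀ n, (cList f n).length = ∑ j ∈ Icc 1 n, f j := by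
  intro n
  induction n with
  | zero => simp [cList]
  | succ n ih =>
    rw [cList, List.length_append, ih, List.length_replicate]
    have : Icc 1 (n + 1) = insert (n + 1) (Icc 1 n) := by
      ext x; simp [Finset.mem_Icc, Finset.mem_insert]; omega
    rw [this, Finset.sum_insert (by simp)]
    omega

lemma cList_sorted (f : ℕ → ℕ) : ∀ n, (cList f n).Pairwise (· ≤ ·) := by
  intro n
  induction n with
  | zero => simp [cList]
  | succ n ih =>
    rw [cList, List.pairwise_append]
    refine ⟨ih, ?_, ?_⟩
    · exact List.pairwise_replicate.2 (Or.inr le_rfl)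
    · intro x hx y hy
      have := cList_mem hx
      have := List.eq_of_mem_replicate hy
      omega

/-! ### the master finsets and inclusion-exclusion -/

/-- sequences as a finset -/
noncomputable def OmegaF (L n : ℕ) : Finset (ℕ → ℕ) := funFinset (Icc 1 L) (Icc 1 n) 0

lemma mem_OmegaF {L n : ℕ} {w : ℕ → ℕ} : w ∈ OmegaF L n ↔ w ∈ Seqs L n := by
  rw [OmegaF, mem_funFinset]; rfl

/-- descent set as a finset -/
def DesF (L : ℕ) (w : ℕ → ℕ) : Finset ℕ := (Finset.Ico 1 L).filter fun i => w (i + 1) < w i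

lemma coe_DesF (L : ℕ) (w : ℕ → ℕ) : (DesF L w : Set ℕ) = Des L w := by
  ext i
  simp [DesF, Des, Finset.mem_Ico, and_assoc]

lemma mem_DesF {L : ℕ} {w : ℕ → ℕ} {i : ℕ} :
    i ∈ DesF L w ↔ 1 ≤ i ∧ i < L ∧ w (i + 1) < w i := by
  simp [DesF, Finset.mem_Ico, and_assoc]

/-- sequences with descent set exactly `K` -/
noncomputable def ddF (m n : ℕ) (K : Finset ℕ) : Finset (ℕ → ℕ) :=
  (OmegaF (n * m) n).filter fun w =>
    DesF (n * m) w = K ∧ ∀ j ∈ Icc 1 n, mult (n * m) w j = m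

/-- sequences with descent set contained in `J` -/
noncomputable def eeF (m n : ℕ) (J : Finset ℕ) : Finset (ℕ → ℕ) :=
  (OmegaF (n * m) n).filter fun w =>
    DesF (n * m) w ⊆ J ∧ ∀ j ∈ Icc 1 n, mult (n * m) w j = m

lemma mem_ddF {m n : ℕ} {K : Finset ℕ} {w : ℕ → ℕ} :
    w ∈ ddF m n K ↔ w ∈ OmegaF (n * m) n ∧
      (DesF (n * m) w = K ∧ ∀ j ∈ Icc 1 n, mult (n * m) w j = m) := by
  rw [ddF, Finset.filter_congr_decidable]; exact Finset.mem_filter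

lemma mem_eeF {m n : ℕ} {J : Finset ℕ} {w : ℕ → ℕ} :
    w ∈ eeF m n J ↔ w ∈ OmegaF (n * m) n ∧
      (DesF (n * m) w ⊆ J ∧ ∀ j ∈ Icc 1 n, mult (n * m) w j = m) := by
  rw [eeF, Finset.filter_congr_decidable]; exact Finset.mem_filter

lemma dP_eq_dd (m n : ℕ) (I : Finset ℕ) : dP m I n = (ddF m n I).card := by
  rw [dP, ← Set.ncard_coe_finset]
  apply congrArg
  ext w
  rw [Set.mem_sep_iff, Finset.mem_coe, mem_ddF, mem_OmegaF]
  constructor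
  · rintro ⟨h1, h2, h3⟩
    exact ⟨h1, by rw [← Finset.coe_inj, coe_DesF]; exact h2, h3⟩
  · rintro ⟨h1, ⟨h2, h3⟩⟩
    exact ⟨h1, by rw [← coe_DesF, h2], h3⟩

lemma ee_eq_sum (m n : ℕ) (J : Finset ℕ) :
    (eeF m n J).card = ∑ K ∈ J.powerset, (ddF m n K).card := by
  classical
  rw [Finset.card_eq_sum_card_fiberwise
    (f := fun w => DesF (n * m) w) (t := J.powerset)
    (fun w hw => by
      rw [Finset.mem_coe, Finset.mem_powerset]
      exact ((mem_eeF.1 hw).2).1)]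
  refine Finset.sum_congr rfl fun K hK => ?_
  rw [Finset.mem_powerset] at hK
  have hset : (eeF m n J).filter (fun w => DesF (n * m) w = K) = ddF m n K := by
    ext w
    rw [Finset.mem_filter, mem_eeF, mem_ddF]
    constructor
    · rintro ⟨⟨h1, h2, h3⟩, h4⟩
      exact ⟨h1, h4, h3⟩
    · rintro ⟨h1, ⟨h2, h3⟩⟩
      exact ⟨⟨h1, by rw [h2]; exact hK, h3⟩, h2⟩
  rw [← hset]

lemma sign_sum_aux (I K : Finset ℕ) (hK : K ∈ I.powerset) :
    (∑ J ∈ I.powerset, if K ⊆ J then (-1 : ℤ) ^ ((I \ J).card) else 0)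
      = if K = I then 1 else 0 := by
  classical
  rw [Finset.mem_powerset] at hK
  rw [← Finset.sum_filter]
  rw [Finset.sum_nbij' (i := fun J => I \ J) (j := fun T => I \ T)
    (t := (I \ K).powerset) (g := fun T => (-1 : ℤ) ^ T.card)
    (hi := ?_) (hj := ?_) (left_neg := ?_) (right_neg := ?_) (h := ?_)]
  · rw [Finset.sum_powerset_neg_one_pow_card]
    by_cases h : K = I
    · rw [if_pos h, if_pos (by rw [h]; exact Finset.sdiff_self I)]
    · rw [if_neg h, if_neg ?_]
      intro he
      rw [Finset.sdiff_eq_empty_iff_subset] at he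
      exact h (Finset.Subset.antisymm hK he)
  · intro J hJ
    simp only [Finset.mem_filter, Finset.mem_powerset] at hJ
    rw [Finset.mem_powerset]
    exact Finset.sdiff_subset_sdiff le_rfl hJ.2
  · intro T hT
    rw [Finset.mem_powerset] at hT
    simp only [Finset.mem_filter, Finset.mem_powerset]
    constructor
    · exact Finset.sdiff_subset
    · intro x hx
      rw [Finset.mem_sdiff]
      refine ⟨hK hx, fun hxT => ?_⟩
      have := hT hxT
      rw [Finset.mem_sdiff] at this
      exact this.2 hx
  · intro J hJ
    simp only [Finset.mem_filter, Finset.mem_powerset] at hJ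
    exact Finset.sdiff_sdiff_eq_self hJ.1
  · intro T hT
    rw [Finset.mem_powerset] at hT
    exact Finset.sdiff_sdiff_eq_self (hT.trans Finset.sdiff_subset)
  · intro J hJ
    rfl

lemma dd_eq_IE (m n : ℕ) (I : Finset ℕ) :
    ((ddF m n I).card : ℤ)
      = ∑ J ∈ I.powerset, (-1 : ℤ) ^ ((I \ J).card) * ((eeF m n J).card : ℤ) := by
  classical
  have key : ∀ J ∈ I.powerset,
      (-1 : ℤ) ^ ((I \ J).card) * ((eeF m n J).card : ℤ)
        = ∑ K ∈ I.powerset, if K ⊆ J then (-1 : ℤ) ^ ((I \ J).card) * ((ddF m n K).card : ℤ)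
            else 0 := by
    intro J hJ
    rw [Finset.mem_powerset] at hJ
    rw [ee_eq_sum]
    push_cast
    rw [Finset.mul_sum]
    rw [← Finset.sum_filter]
    congr 1
    · congr 1
      ext K
      simp only [Finset.mem_powerset, Finset.mem_filter]
      constructor
      · intro h; exact ⟨h.trans hJ, h⟩
      · intro h; exact h.2
  rw [Finset.sum_congr rfl key, Finset.sum_comm]
  have key2 : ∀ K ∈ I.powerset,
      (∑ J ∈ I.powerset, if K ⊆ J then (-1 : ℤ) ^ ((I \ J).card) * ((ddF m n K).card : ℤ)
          else 0)
        = (if K = I then 1 else 0) * ((ddF m n K).card : ℤ) := by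
    intro K hK
    have := sign_sum_aux I K hK
    calc (∑ J ∈ I.powerset, if K ⊆ J then (-1 : ℤ) ^ ((I \ J).card) * ((ddF m n K).card : ℤ)
          else 0)
        = (∑ J ∈ I.powerset, if K ⊆ J then (-1 : ℤ) ^ ((I \ J).card) else 0)
            * ((ddF m n K).card : ℤ) := by
          rw [Finset.sum_mul]
          refine Finset.sum_congr rfl fun J hJ => ?_
          split <;> simp
      _ = (if K = I then 1 else 0) * ((ddF m n K).card : ℤ) := by rw [this]
  rw [Finset.sum_congr rfl key2,
    Finset.sum_congr rfl (fun x _ => by rw [ite_mul, one_mul, zero_mul]),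
    Finset.sum_ite_eq' I.powerset I _, if_pos (by rw [Finset.mem_powerset])]

/-! ### matrices -/

/-- vectors in `ℕ^r` with sum of entries at most `m` -/
def vecF (r m : ℕ) : Finset (Fin r → ℕ) :=
  (Fintype.piFinset fun _ => Finset.range (m + 1)).filter fun x => ∑ c, x c ≤ m

lemma mem_vecF {r m : ℕ} {x : Fin r → ℕ} : x ∈ vecF r m ↔ ∑ c, x c ≤ m := by
  constructor
  · intro h; exact (Finset.mem_filter.1 h).2
  · intro h
    refine Finset.mem_filter.2 ⟨Fintype.mem_piFinset.2 fun c => Finset.mem_range.2 ?_, h⟩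
    have := Finset.single_le_sum (f := x) (fun i _ => Nat.zero_le _) (Finset.mem_univ c)
    omega

/-- matrices with rows indexed by `{1,…,n}` whose rows have sum at most `m` and
whose `c`-th column sums to `α_{c+1} - α_c`. -/
noncomputable def MatB (n m : ℕ) (J : Finset ℕ) : Finset (ℕ → Fin J.card → ℕ) :=
  (funFinset (Icc 1 n) (vecF J.card m) 0).filter fun M =>
    ∀ c : Fin J.card, (∑ j ∈ Icc 1 n, M j c) = alphaVal J ((c : ℕ) + 1) - alphaVal J (c : ℕ)

lemma mem_MatB {n m : ℕ} {J : Finset ℕ} {M : ℕ → Fin J.card → ℕ} :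
    M ∈ MatB n m J ↔
      ((∀ i ∈ Icc 1 n, M i ∈ vecF J.card m) ∧ ∀ i ∉ Icc 1 n, M i = 0) ∧
      ∀ c : Fin J.card, (∑ j ∈ Icc 1 n, M j c) = alphaVal J ((c : ℕ) + 1) - alphaVal J (c : ℕ) := by
  rw [MatB, Finset.filter_congr_decidable, Finset.mem_filter, mem_funFinset]

/-- the coefficient `g_J(k)`: matrices with `k` nonzero rows and prescribed column sums. -/
noncomputable def gJ (m : ℕ) (J : Finset ℕ) (k : ℕ) : ℕ :=
  ((funFinset (Icc 1 k) ((vecF J.card m).erase 0) 0).filter fun M =>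
    ∀ c : Fin J.card, (∑ j ∈ Icc 1 k, M j c) = alphaVal J ((c : ℕ) + 1) - alphaVal J (c : ℕ)).card

lemma mem_gJset {m k : ℕ} {J : Finset ℕ} {M : ℕ → Fin J.card → ℕ} :
    M ∈ ((funFinset (Icc 1 k) ((vecF J.card m).erase 0) 0).filter fun M =>
      ∀ c : Fin J.card, (∑ j ∈ Icc 1 k, M j c) = alphaVal J ((c : ℕ) + 1) - alphaVal J (c : ℕ)) ↔
      ((∀ i ∈ Icc 1 k, M i ∈ (vecF J.card m).erase 0) ∧ ∀ i ∉ Icc 1 k, M i = 0) ∧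
      ∀ c : Fin J.card, (∑ j ∈ Icc 1 k, M j c) = alphaVal J ((c : ℕ) + 1) - alphaVal J (c : ℕ) := by
  rw [Finset.mem_filter, mem_funFinset]

/-! ### counting matrices by support -/

lemma fiber_card (n m : ℕ) (J : Finset ℕ) (K : Finset ℕ) (hK : K ⊆ Icc 1 n) :
    ((MatB n m J).filter fun M => ((Icc 1 n).filter fun j => M j ≠ 0) = K).card
      = gJ m J K.card := by
  classical
  set e := K.orderIsoOfFin rfl with he
  set eFun : ℕ → ℕ := fun j => if h : j - 1 < K.card then ((e ⟨j - 1, h⟩ : K) : ℕ) else 0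
    with heFun
  set eInv : ℕ → ℕ := fun i => if h : i ∈ K then ((e.symm ⟨i, h⟩ : Fin K.card) : ℕ) + 1 else 0
    with heInv
  have f1 : ∀ j ∈ Icc 1 K.card, eFun j ∈ K ∧ eInv (eFun j) = j := by
    intro j hj
    rw [Finset.mem_Icc] at hj
    have h : j - 1 < K.card := by omega
    have hmem : eFun j ∈ K := by
      rw [heFun]; simp only [dif_pos h]; exact (e ⟨j - 1, h⟩).2
    refine ⟨hmem, ?_⟩
    rw [heInv]
    simp only [dif_pos hmem]
    have hsub : (⟨eFun j, hmem⟩ : K) = e ⟨j - 1, h⟩ := by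
      apply Subtype.ext
      show eFun j = _
      simp only [heFun, dif_pos h]
    rw [hsub, OrderIso.symm_apply_apply]
    simp
    omega
  have f2 : ∀ i ∈ K, eInv i ∈ Icc 1 K.card ∧ eFun (eInv i) = i := by
    intro i hi
    have hval : ((e.symm ⟨i, hi⟩ : Fin K.card) : ℕ) < K.card := (e.symm ⟨i, hi⟩).2
    have hei : eInv i = ((e.symm ⟨i, hi⟩ : Fin K.card) : ℕ) + 1 := by
      rw [heInv]; simp only [dif_pos hi]
    refine ⟨by rw [hei, Finset.mem_Icc]; omega, ?_⟩
    rw [hei, heFun]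
    have h : ((e.symm ⟨i, hi⟩ : Fin K.card) : ℕ) + 1 - 1 < K.card := by omega
    simp only [dif_pos h]
    have : (⟨((e.symm ⟨i, hi⟩ : Fin K.card) : ℕ) + 1 - 1, h⟩ : Fin K.card)
        = e.symm ⟨i, hi⟩ := by
      apply Fin.ext
      simp
    rw [this, OrderIso.apply_symm_apply]
  have sum_transfer : ∀ (F : ℕ → ℕ),
      (∑ j ∈ Icc 1 K.card, F (eFun j)) = ∑ i ∈ K, F i := by
    intro F
    refine Finset.sum_nbij' (i := eFun) (j := eInv) ?_ ?_ ?_ ?_ ?_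
    · intro a ha; exact (f1 a ha).1
    · intro a ha; exact (f2 a ha).1
    · intro a ha; exact (f1 a ha).2
    · intro a ha; exact (f2 a ha).2
    · intro a ha; rfl
  refine Finset.card_bij'
    (i := fun M _ => fun j => if j ∈ Icc 1 K.card then M (eFun j) else 0)
    (j := fun N _ => fun i => if i ∈ K then N (eInv i) else 0)
    ?_ ?_ ?_ ?_
  · -- maps into gJ set
    intro M hM
    beta_reduce
    rw [Finset.mem_filter] at hM
    obtain ⟨hMB, hsupp⟩ := hM
    rw [mem_MatB] at hMB
    obtain ⟨⟨hval, hz⟩, hcol⟩ := hMB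
    have hnz : ∀ i ∈ K, M i ≠ 0 := by
      intro i hi
      have := hsupp ▸ hi
      rw [← hsupp] at hi
      exact (Finset.mem_filter.1 hi).2
    have hMK : ∀ j ∈ Icc 1 n, j ∉ K → M j = 0 := by
      intro j hj hjK
      by_contra hne
      exact hjK (hsupp ▸ Finset.mem_filter.2 ⟨hj, hne⟩)
    rw [mem_gJset]
    refine ⟨⟨?_, ?_⟩, ?_⟩
    · intro i hi
      rw [if_pos hi]
      have h1 := (f1 i hi).1
      exact Finset.mem_erase.2 ⟨hnz _ h1, hval _ (hK h1)⟩
    · intro i hi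
      rw [if_neg hi]
    · intro c
      have hterm : (∑ j ∈ Icc 1 K.card,
          ((if j ∈ Icc 1 K.card then M (eFun j) else 0) c : ℕ))
          = ∑ j ∈ Icc 1 K.card, (fun i => M i c) (eFun j) := by
        refine Finset.sum_congr rfl fun j hj => ?_
        rw [if_pos hj]
      rw [hterm, sum_transfer (fun i => M i c), ← hcol c]
      refine Finset.sum_subset hK ?_
      intro j hj hjK
      rw [hMK j hj hjK]
      rfl
  · -- maps back into fiber
    intro N hN
    beta_reduce
    rw [mem_gJset] at hN
    obtain ⟨⟨hval, hz⟩, hcol⟩ := hN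
    rw [Finset.mem_filter]
    have hNK : ∀ i ∈ K, (if i ∈ K then N (eInv i) else 0) = N (eInv i) := by
      intro i hi; rw [if_pos hi]
    constructor
    · rw [mem_MatB]
      refine ⟨⟨?_, ?_⟩, ?_⟩
      · intro i hi
        by_cases hiK : i ∈ K
        · rw [if_pos hiK]
          exact Finset.mem_of_mem_erase (hval _ (f2 i hiK).1)
        · rw [if_neg hiK]
          rw [mem_vecF]
          simp
      · intro i hi
        rw [if_neg (fun h => hi (hK h))]
      · intro c
        rw [← hcol c]
        have h1 : (∑ j ∈ Icc 1 n, ((if j ∈ K then N (eInv j) else 0) c : ℕ))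
            = ∑ j ∈ K, N (eInv j) c := by
          rw [← Finset.sum_subset hK (fun j hj hjK => by rw [if_neg hjK]; rfl)]
          refine Finset.sum_congr rfl fun j hj => ?_
          rw [if_pos hj]
        rw [h1, ← sum_transfer (fun i => N (eInv i) c)]
        refine Finset.sum_congr rfl fun j hj => ?_
        rw [(f1 j hj).2]
    · -- support is exactly K
      ext i
      rw [Finset.mem_filter]
      constructor
      · rintro ⟨hi, hne⟩
        by_contra hiK
        exact hne (by beta_reduce; rw [if_neg hiK])
      · intro hi
        refine ⟨hK hi, ?_⟩
        beta_reduce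
        rw [if_pos hi]
        have := hval _ (f2 i hi).1
        exact (Finset.mem_erase.1 this).1
  · -- left inverse
    intro M hM
    beta_reduce
    rw [Finset.mem_filter] at hM
    obtain ⟨hMB, hsupp⟩ := hM
    rw [mem_MatB] at hMB
    obtain ⟨⟨hval, hz⟩, hcol⟩ := hMB
    funext i
    by_cases hiK : i ∈ K
    · rw [if_pos hiK, if_pos (f2 i hiK).1, (f2 i hiK).2]
    · rw [if_neg hiK]
      by_cases hin : i ∈ Icc 1 n
      · by_contra hne
        have : M i ≠ 0 := fun h => hne h.symm
        exact hiK (hsupp ▸ Finset.mem_filter.2 ⟨hin, this⟩)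
      · exact (hz i hin).symm
  · -- right inverse
    intro N hN
    beta_reduce
    rw [mem_gJset] at hN
    obtain ⟨⟨hval, hz⟩, hcol⟩ := hN
    funext j
    by_cases hj : j ∈ Icc 1 K.card
    · rw [if_pos hj, if_pos (f1 j hj).1, (f1 j hj).2]
    · rw [if_neg hj]
      exact (hz j hj).symm

lemma MatB_card (n m : ℕ) (J : Finset ℕ) :
    (MatB n m J).card = ∑ k ∈ Finset.range (n + 1), n.choose k * gJ m J k := by
  classical
  rw [Finset.card_eq_sum_card_fiberwise
    (f := fun M => (Icc 1 n).filter fun j => M j ≠ 0) (t := (Icc 1 n).powerset)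
    (fun M _ => Finset.mem_powerset.2 (Finset.filter_subset _ _))]
  have h1 : ∀ K ∈ (Icc 1 n).powerset,
      ((MatB n m J).filter fun M => ((Icc 1 n).filter fun j => M j ≠ 0) = K).card
        = gJ m J K.card := fun K hK => fiber_card n m J K (Finset.mem_powerset.1 hK)
  rw [Finset.sum_congr rfl h1, Finset.sum_powerset_apply_card (f := fun k => gJ m J k)]
  have h2 : (Icc 1 n).card = n := by rw [Nat.card_Icc]; omega
  rw [h2]
  refine Finset.sum_congr rfl fun k _ => ?_
  rw [smul_eq_mul]

/-- vanishing of `g_J(k)` for `k` large -/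
lemma gJ_eq_zero {m k : ℕ} {J : Finset ℕ} (hpos : ∀ x ∈ J, 1 ≤ x)
    (hk : alphaVal J J.card < k) : gJ m J k = 0 := by
  classical
  rw [gJ, Finset.card_eq_zero, Finset.eq_empty_iff_forall_notMem]
  intro M hM
  rw [mem_gJset] at hM
  obtain ⟨⟨hval, hz⟩, hcol⟩ := hM
  have hrow : ∀ j ∈ Icc 1 k, 1 ≤ ∑ c, M j c := by
    intro j hj
    have hne := (Finset.mem_erase.1 (hval j hj)).1
    by_contra hle
    push_neg at hle
    refine hne (funext fun c => ?_)
    have h0 : ∑ c, M j c = 0 := by omega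
    have := (Finset.sum_eq_zero_iff).1 h0 c (Finset.mem_univ c)
    simpa using this
  have hb : k ≤ ∑ j ∈ Icc 1 k, ∑ c, M j c := by
    calc k = ∑ j ∈ Icc 1 k, 1 := by rw [Finset.sum_const, Nat.card_Icc, smul_eq_mul]; omega
    _ ≤ _ := Finset.sum_le_sum hrow
  rw [Finset.sum_comm] at hb
  have hc : ∀ c : Fin J.card, (c : ℕ) + 1 ≤ J.card := fun c => c.2
  have htel : (∑ c : Fin J.card, ∑ j ∈ Icc 1 k, M j c) = alphaVal J J.card := by
    rw [Finset.sum_congr rfl (fun c _ => hcol c),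
      Fin.sum_univ_eq_sum_range (fun c => alphaVal J (c + 1) - alphaVal J c) J.card]
    have heq : ∀ c ∈ Finset.range J.card,
        alphaVal J (c + 1) - alphaVal J c
          = cutE J (alphaVal J J.card) (c + 1) - cutE J (alphaVal J J.card) c := by
      intro c hc
      rw [Finset.mem_range] at hc
      rw [cutE, if_pos (by omega), cutE, if_pos (by omega)]
    rw [Finset.sum_congr rfl heq,
      tele_sum (cutE_mono hpos le_rfl) (cutE_zero hpos le_rfl), cutE, if_pos le_rfl]
  rw [htel] at hb
  omega

/-! ### the bijection between sequences and matrices -/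

/-- number of occurrences of `j` in the `c`-th block of `w` -/
def cnt (J : Finset ℕ) (L : ℕ) (w : ℕ → ℕ) (c j : ℕ) : ℕ :=
  ((Ioc (cutE J L c) (cutE J L (c + 1))).filter fun i => w i = j).card

section Bij

variable {J : Finset ℕ} {L : ℕ} (hpos : ∀ x ∈ J, 1 ≤ x) (hβL : alphaVal J J.card ≤ L)

include hpos hβL

lemma cnt_eq_count (w : ℕ → ℕ) (c j : ℕ) :
    cnt J L w c j = (blk w (cutE J L c) (cutE J L (c + 1))).count j :=
  (blk_count w _ j _ (cutE_mono hpos hβL (Nat.le_succ c))).symm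

lemma sum_cnt (w : ℕ → ℕ) (j : ℕ) : ∀ k,
    (∑ c ∈ Finset.range k, cnt J L w c j)
      = ((Ioc 0 (cutE J L k)).filter fun i => w i = j).card := by
  intro k
  induction k with
  | zero => simp [cutE_zero hpos hβL]
  | succ k ih =>
    rw [Finset.sum_range_succ, ih]
    have hun : Ioc 0 (cutE J L k) ∪ Ioc (cutE J L k) (cutE J L (k + 1))
        = Ioc 0 (cutE J L (k + 1)) :=
      Finset.Ioc_union_Ioc_eq_Ioc (Nat.zero_le _) (cutE_mono hpos hβL (Nat.le_succ k))
    have hdis : Disjoint (Ioc 0 (cutE J L k)) (Ioc (cutE J L k) (cutE J L (k + 1))) := by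
      rw [Finset.disjoint_left]
      intro a ha hb
      rw [Finset.mem_Ioc] at ha hb
      omega
    rw [cnt, ← hun, Finset.filter_union,
      Finset.card_union_of_disjoint (Finset.disjoint_filter_filter hdis)]

lemma mult_eq_sum_cnt (w : ℕ → ℕ) (j : ℕ) :
    mult L w j = ∑ c ∈ Finset.range (J.card + 1), cnt J L w c j := by
  have hic : Icc 1 L = Ioc 0 L := by
    ext x
    simp only [Finset.mem_Icc, Finset.mem_Ioc]
    omega
  rw [mult, hic, sum_cnt hpos hβL, cutE_last hpos hβL]

lemma blk_sorted_of_nodesc {w : ℕ → ℕ} (hdes : DesF L w ⊆ J) (c : ℕ) :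
    (blk w (cutE J L c) (cutE J L (c + 1))).Pairwise (· ≤ ·) := by
  apply blk_sorted_of
  intro i h1 h2
  by_contra hlt
  push_neg at hlt
  have hiJ : i ∈ J := hdes (mem_DesF.2 ⟨by omega, by
    have := cutE_le hpos hβL (c + 1); omega, hlt⟩)
  have := cutE_interior hpos hβL hiJ h1 (by omega)
  omega

lemma cnt_zero_out {n : ℕ} (hLn : cutE J L (J.card + 1) = L) {w : ℕ → ℕ}
    (hw : ∀ i ∈ Icc 1 L, w i ∈ Icc 1 n) {j : ℕ} (hj : j ∉ Icc 1 n) {c : ℕ} :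
    cnt J L w c j = 0 := by
  rw [cnt, Finset.card_eq_zero, Finset.filter_eq_empty_iff]
  intro i hi
  rw [Finset.mem_Ioc] at hi
  have hle := cutE_le hpos hβL (c + 1)
  have : w i ∈ Icc 1 n := hw i (by rw [Finset.mem_Icc]; omega)
  intro he
  exact hj (he ▸ this)

end Bij

/-- the map from sequences to matrices -/
def PhiM (J : Finset ℕ) (L n : ℕ) (w : ℕ → ℕ) : ℕ → Fin J.card → ℕ :=
  fun j => if j ∈ Icc 1 n then (fun c : Fin J.card => cnt J L w (c : ℕ) j) else 0

lemma PhiM_apply_pos {J : Finset ℕ} {L n : ℕ} {w : ℕ → ℕ} {j : ℕ} (hj : j ∈ Icc 1 n)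
    (c : Fin J.card) : PhiM J L n w j c = cnt J L w (c : ℕ) j := by
  show (if j ∈ Icc 1 n then (fun c : Fin J.card => cnt J L w (c : ℕ) j) else 0) c = _
  rw [if_pos hj]

lemma PhiM_neg {J : Finset ℕ} {L n : ℕ} {w : ℕ → ℕ} {j : ℕ} (hj : j ∉ Icc 1 n) :
    PhiM J L n w j = 0 := by
  show (if j ∈ Icc 1 n then (fun c : Fin J.card => cnt J L w (c : ℕ) j) else 0) = 0
  rw [if_neg hj]

/-- last-column counts from the matrix -/
def colC (J : Finset ℕ) (m : ℕ) (M : ℕ → Fin J.card → ℕ) (c j : ℕ) : ℕ :=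
  if h : c < J.card then M j ⟨c, h⟩ else m - ∑ c', M j c'

/-- the `c`-th block of the sequence built from a matrix -/
def blkL (J : Finset ℕ) (n m : ℕ) (M : ℕ → Fin J.card → ℕ) (c : ℕ) : List ℕ :=
  cList (colC J m M c) n

/-- concatenation of the first `k` blocks -/
def gL (J : Finset ℕ) (n m : ℕ) (M : ℕ → Fin J.card → ℕ) : ℕ → List ℕ
  | 0 => []
  | k + 1 => gL J n m M k ++ blkL J n m M k

/-- the sequence built from a matrix -/
def buildW (J : Finset ℕ) (n m : ℕ) (M : ℕ → Fin J.card → ℕ) : ℕ → ℕ :=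
  fun i => if 1 ≤ i then (gL J n m M (J.card + 1)).getD (i - 1) 0 else 0

lemma mem_gL {J : Finset ℕ} {n m : ℕ} {M : ℕ → Fin J.card → ℕ} {x : ℕ} :
    ∀ {k}, x ∈ gL J n m M k → 1 ≤ x ∧ x ≤ n := by
  intro k
  induction k with
  | zero => simp [gL]
  | succ k ih =>
    intro hx
    rw [gL, List.mem_append] at hx
    rcases hx with hx | hx
    · exact ih hx
    · exact cList_mem hx

lemma alpha_tele {J : Finset ℕ} (hpos : ∀ x ∈ J, 1 ≤ x) :
    (∑ c : Fin J.card, (alphaVal J ((c : ℕ) + 1) - alphaVal J (c : ℕ)))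
      = alphaVal J J.card := by
  rw [Fin.sum_univ_eq_sum_range (fun c => alphaVal J (c + 1) - alphaVal J c) J.card]
  have heq : ∀ c ∈ Finset.range J.card,
      alphaVal J (c + 1) - alphaVal J c
        = cutE J (alphaVal J J.card) (c + 1) - cutE J (alphaVal J J.card) c := by
    intro c hc
    rw [Finset.mem_range] at hc
    rw [cutE, if_pos (by omega), cutE, if_pos (by omega)]
  rw [Finset.sum_congr rfl heq,
    tele_sum (cutE_mono hpos le_rfl) (cutE_zero hpos le_rfl), cutE, if_pos le_rfl]

section Surj

variable {J : Finset ℕ} {n m : ℕ} {M : ℕ → Fin J.card → ℕ}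
  (hpos : ∀ x ∈ J, 1 ≤ x) (hβL : alphaVal J J.card ≤ n * m)
  (hM : M ∈ MatB n m J)

include hpos hβL hM

lemma blkL_length {c : ℕ} (hc : c ≤ J.card) :
    (blkL J n m M c).length = cutE J (n * m) (c + 1) - cutE J (n * m) c := by
  obtain ⟨⟨hval, hz⟩, hcol⟩ := mem_MatB.1 hM
  rw [blkL, cList_length]
  by_cases h : c < J.card
  · have : ∀ j ∈ Icc 1 n, colC J m M c j = M j ⟨c, h⟩ := by
      intro j hj; rw [colC, dif_pos h]
    rw [Finset.sum_congr rfl this, hcol ⟨c, h⟩, cutE, if_pos (by omega), cutE, if_pos (by omega)]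
  · have hcc : c = J.card := by omega
    subst hcc
    have : ∀ j ∈ Icc 1 n, colC J m M J.card j = m - ∑ c', M j c' := by
      intro j hj; rw [colC, dif_neg (by omega)]
    have hdist : (∑ j ∈ Icc 1 n, (m - ∑ c', M j c'))
        = (∑ j ∈ Icc 1 n, m) - ∑ j ∈ Icc 1 n, ∑ c', M j c' :=
      Finset.sum_tsub_distrib (Icc 1 n) (fun j hj => mem_vecF.1 (hval j hj))
    rw [Finset.sum_congr rfl this, hdist]
    have h1 : (∑ j ∈ Icc 1 n, m) = n * m := by
      rw [Finset.sum_const, Nat.card_Icc, smul_eq_mul, Nat.add_sub_cancel]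
    have h2 : (∑ j ∈ Icc 1 n, ∑ c', M j c') = alphaVal J J.card := by
      rw [Finset.sum_comm, Finset.sum_congr rfl (fun c' _ => hcol c'), alpha_tele hpos]
    rw [h1, h2, cutE_last hpos hβL, cutE, if_pos le_rfl]

lemma gL_length : ∀ {k}, k ≤ J.card + 1 → (gL J n m M k).length = cutE J (n * m) k := by
  intro k
  induction k with
  | zero => intro _; rw [gL, List.length_nil, cutE_zero hpos hβL]
  | succ k ih =>
    intro hk
    have hmono := cutE_mono hpos hβL (show k ≤ k + 1 by omega)
    rw [gL, List.length_append, ih (by omega), blkL_length hpos hβL hM (by omega)]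
    omega

lemma gL_prefix {c : ℕ} : ∀ {k}, c + 1 ≤ k →
    ∃ rest, gL J n m M k = (gL J n m M c ++ blkL J n m M c) ++ rest := by
  intro k
  induction k with
  | zero => omega
  | succ k ih =>
    intro hk
    by_cases h : c + 1 ≤ k
    · obtain ⟨rest, hrest⟩ := ih h
      exact ⟨rest ++ blkL J n m M k, by rw [gL, hrest, List.append_assoc]⟩
    · have : c = k := by omega
      subst this
      exact ⟨[], by rw [gL, List.append_nil]⟩

lemma blk_buildW {c : ℕ} (hc : c ≤ J.card) :
    blk (buildW J n m M) (cutE J (n * m) c) (cutE J (n * m) (c + 1)) = blkL J n m M c := by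
  have hlen : (blkL J n m M c).length = cutE J (n * m) (c + 1) - cutE J (n * m) c :=
    blkL_length hpos hβL hM hc
  apply List.ext_getElem
  · rw [blk_length, hlen]
  · intro k hk1 hk2
    rw [blk_getElem _ _ _ _ hk1]
    rw [blk_length] at hk1
    have h1 : 1 ≤ cutE J (n * m) c + 1 + k := by omega
    rw [buildW, if_pos h1]
    obtain ⟨rest, hrest⟩ := gL_prefix hpos hβL hM (show c + 1 ≤ J.card + 1 by omega)
    have hgc : (gL J n m M c).length = cutE J (n * m) c := gL_length hpos hβL hM (by omega)
    have e1 : cutE J (n * m) c + 1 + k - 1 = cutE J (n * m) c + k := by omega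
    have hklen : k < (blkL J n m M c).length := by omega
    rw [e1, hrest, List.getD_append _ _ _ _ (by rw [List.length_append, hgc]; omega),
      List.getD_append_right _ _ _ _ (by rw [hgc]; omega)]
    rw [hgc]
    have e2 : cutE J (n * m) c + k - cutE J (n * m) c = k := by omega
    rw [e2, List.getD_eq_getElem _ _ hklen]

lemma buildW_mem_Omega : buildW J n m M ∈ OmegaF (n * m) n := by
  rw [OmegaF, mem_funFinset]
  constructor
  · intro i hi
    rw [Finset.mem_Icc] at hi
    have hlen : (gL J n m M (J.card + 1)).length = n * m := by
      rw [gL_length hpos hβL hM le_rfl, cutE_last hpos hβL]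
    rw [buildW, if_pos (by omega)]
    have hil : i - 1 < (gL J n m M (J.card + 1)).length := by omega
    rw [List.getD_eq_getElem _ _ hil]
    have := mem_gL (List.getElem_mem hil)
    rw [Finset.mem_Icc]
    exact this
  · intro i hi
    rw [Finset.mem_Icc] at hi
    by_cases h0 : 1 ≤ i
    · have hiL : n * m < i := by omega
      rw [buildW, if_pos h0]
      apply List.getD_eq_default
      rw [gL_length hpos hβL hM le_rfl, cutE_last hpos hβL]
      omega
    · rw [buildW, if_neg h0]

lemma buildW_des : DesF (n * m) (buildW J n m M) ⊆ J := by
  intro i hi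
  rw [mem_DesF] at hi
  obtain ⟨h1, h2, h3⟩ := hi
  obtain ⟨c, hc, hcl, hcu⟩ := cutE_cover hpos hβL h1 (by omega)
  by_cases hlt : i < cutE J (n * m) (c + 1)
  · exfalso
    have hsorted : (blk (buildW J n m M) (cutE J (n * m) c)
        (cutE J (n * m) (c + 1))).Pairwise (· ≤ ·) := by
      rw [blk_buildW hpos hβL hM hc]
      exact cList_sorted _ _
    have := blk_sorted_step hsorted hcl (by omega)
    omega
  · have hieq : i = cutE J (n * m) (c + 1) := by omega
    by_cases hcr : c + 1 ≤ J.card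
    · rw [hieq]
      exact cutE_succ_mem hpos hβL hcr
    · exfalso
      have : c = J.card := by omega
      subst this
      rw [cutE_last hpos hβL] at hieq
      omega

lemma buildW_cnt {c j : ℕ} (hc : c ≤ J.card) (hj : j ∈ Icc 1 n) :
    cnt J (n * m) (buildW J n m M) c j = colC J m M c j := by
  rw [cnt_eq_count hpos hβL, blk_buildW hpos hβL hM hc, blkL, cList_count]
  rw [Finset.mem_Icc] at hj
  rw [if_pos (by omega)]

lemma buildW_mult {j : ℕ} (hj : j ∈ Icc 1 n) : mult (n * m) (buildW J n m M) j = m := by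
  obtain ⟨⟨hval, hz⟩, hcol⟩ := mem_MatB.1 hM
  rw [mult_eq_sum_cnt hpos hβL]
  have hterm : ∀ c ∈ Finset.range (J.card + 1),
      cnt J (n * m) (buildW J n m M) c j = colC J m M c j := by
    intro c hc
    rw [Finset.mem_range] at hc
    exact buildW_cnt hpos hβL hM (by omega) hj
  rw [Finset.sum_congr rfl hterm, Finset.sum_range_succ]
  have h1 : (∑ c ∈ Finset.range J.card, colC J m M c j) = ∑ c' : Fin J.card, M j c' := by
    rw [← Fin.sum_univ_eq_sum_range (fun c => colC J m M c j) J.card]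
    refine Finset.sum_congr rfl fun c _ => ?_
    rw [colC, dif_pos c.2]
  rw [h1, colC, dif_neg (by omega)]
  have hsum := mem_vecF.1 (hval j hj)
  omega

lemma buildW_Phi : PhiM J (n * m) n (buildW J n m M) = M := by
  obtain ⟨⟨hval, hz⟩, hcol⟩ := mem_MatB.1 hM
  funext j
  by_cases hj : j ∈ Icc 1 n
  · funext c
    rw [PhiM_apply_pos hj c]
    have hcv := buildW_cnt hpos hβL hM (show (c : ℕ) ≤ J.card by omega) hj
    rw [hcv, colC, dif_pos c.2]
  · rw [PhiM_neg hj]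
    exact (hz j hj).symm

end Surj

/-- the key bijection: sequences with `Des ⊆ J` correspond to matrices. -/
lemma ee_card_eq_MatB {J : Finset ℕ} {n m : ℕ} (hpos : ∀ x ∈ J, 1 ≤ x)
    (hβL : alphaVal J J.card ≤ n * m) :
    (eeF m n J).card = (MatB n m J).card := by
  classical
  refine Finset.card_bij (fun w _ => PhiM J (n * m) n w) ?_ ?_ ?_
  · -- membership
    intro w hw
    obtain ⟨hΩ, hdes, hmult⟩ := mem_eeF.1 hw
    rw [OmegaF, mem_funFinset] at hΩ
    obtain ⟨hval, hz⟩ := hΩ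
    rw [mem_MatB]
    refine ⟨⟨?_, ?_⟩, ?_⟩
    · intro j hj
      rw [mem_vecF]
      have hrw : (∑ c : Fin J.card, PhiM J (n * m) n w j c)
          = ∑ c ∈ Finset.range J.card, cnt J (n * m) w c j := by
        have h1 : (∑ c : Fin J.card, PhiM J (n * m) n w j c)
            = ∑ c : Fin J.card, cnt J (n * m) w (c : ℕ) j :=
          Finset.sum_congr rfl (fun c _ => PhiM_apply_pos hj c)
        rw [h1]
        exact Fin.sum_univ_eq_sum_range (fun c => cnt J (n * m) w c j) J.card
      rw [hrw]
      have hle : (∑ c ∈ Finset.range J.card, cnt J (n * m) w c j)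
          ≤ ∑ c ∈ Finset.range (J.card + 1), cnt J (n * m) w c j :=
        Finset.sum_le_sum_of_subset (Finset.range_subset_range.2 (by omega))
      rw [← mult_eq_sum_cnt hpos hβL, hmult j hj] at hle
      exact hle
    · intro j hj
      exact PhiM_neg hj
    · intro c
      have hterm : ∀ j ∈ Icc 1 n, PhiM J (n * m) n w j c = cnt J (n * m) w (c : ℕ) j := by
        intro j hj
        exact PhiM_apply_pos hj c
      rw [Finset.sum_congr rfl hterm]
      have hcard : (∑ j ∈ Icc 1 n, cnt J (n * m) w (c : ℕ) j)
          = (Ioc (cutE J (n * m) (c : ℕ)) (cutE J (n * m) ((c : ℕ) + 1))).card := by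
        simp only [cnt]
        exact (Finset.card_eq_sum_card_fiberwise (f := w) (t := Icc 1 n) (fun i hi => by
          rw [Finset.mem_coe, Finset.mem_Ioc] at hi
          have hle := cutE_le hpos hβL ((c : ℕ) + 1)
          exact hval i (by rw [Finset.mem_Icc]; omega))).symm
      have hc2 : (c : ℕ) < J.card := c.2
      rw [hcard, Nat.card_Ioc]
      simp only [cutE]
      rw [if_pos (by omega), if_pos (by omega)]
  · -- injectivity
    intro w hw w' hw' heq
    obtain ⟨hΩ, hdes, hmult⟩ := mem_eeF.1 hw
    obtain ⟨hΩ', hdes', hmult'⟩ := mem_eeF.1 hw'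
    rw [OmegaF, mem_funFinset] at hΩ hΩ'
    have hcnt : ∀ c, c ≤ J.card → ∀ j, cnt J (n * m) w c j = cnt J (n * m) w' c j := by
      intro c hc j
      by_cases hj : j ∈ Icc 1 n
      · have hcol : ∀ c' : Fin J.card,
            cnt J (n * m) w (c' : ℕ) j = cnt J (n * m) w' (c' : ℕ) j := by
          intro c'
          have hfc := congrFun (congrFun heq j) c'
          rw [PhiM_apply_pos hj c', PhiM_apply_pos hj c'] at hfc
          exact hfc
        by_cases hcr : c < J.card
        · exact hcol ⟨c, hcr⟩
        · have hcc : c = J.card := by omega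
          subst hcc
          have hpartial : (∑ c' ∈ Finset.range J.card, cnt J (n * m) w c' j)
              = ∑ c' ∈ Finset.range J.card, cnt J (n * m) w' c' j := by
            refine Finset.sum_congr rfl fun c' hc' => ?_
            rw [Finset.mem_range] at hc'
            exact hcol ⟨c', hc'⟩
          have e1 := mult_eq_sum_cnt hpos hβL w j
          have e2 := mult_eq_sum_cnt hpos hβL w' j
          rw [hmult j hj] at e1
          rw [hmult' j hj] at e2
          rw [Finset.sum_range_succ] at e1 e2
          omega
      · rw [cnt_zero_out hpos hβL (cutE_last hpos hβL) hΩ.1 hj,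
          cnt_zero_out hpos hβL (cutE_last hpos hβL) hΩ'.1 hj]
    have hblk : ∀ c, c ≤ J.card →
        blk w (cutE J (n * m) c) (cutE J (n * m) (c + 1))
          = blk w' (cutE J (n * m) c) (cutE J (n * m) (c + 1)) := by
      intro c hc
      refine List.Perm.eq_of_pairwise' (blk_sorted_of_nodesc hpos hβL hdes c)
        (blk_sorted_of_nodesc hpos hβL hdes' c) ?_
      rw [List.perm_iff_count]
      intro j
      rw [← cnt_eq_count hpos hβL, ← cnt_eq_count hpos hβL]
      exact hcnt c hc j
    funext i
    by_cases hi : i ∈ Icc 1 (n * m)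
    · rw [Finset.mem_Icc] at hi
      obtain ⟨c, hc, hcl, hcu⟩ := cutE_cover hpos hβL (i := i) (by omega) (by omega)
      exact blk_ext (hblk c hc) hcl hcu
    · rw [hΩ.2 i hi, hΩ'.2 i hi]
  · -- surjectivity
    intro M hM
    refine ⟨buildW J n m M, ?_, buildW_Phi hpos hβL hM⟩
    rw [mem_eeF]
    exact ⟨buildW_mem_Omega hpos hβL hM, buildW_des hpos hβL hM,
      fun j hj => buildW_mult hpos hβL hM hj⟩

end Aux

/-- for every positive integer `m`, there is a polynomial `p ∈ ℚ[x]` with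
`𝔡^m(I,n) = p(n)` for all integers `n ≥ α_t`. -/
theorem stmt_7 (I : Finset ℕ) (hI : I.Nonempty) (hIpos : ∀ x ∈ I, 1 ≤ x)
    (m : ℕ) (hm : 1 ≤ m) :
    ∃ p : Polynomial ℚ, ∀ n : ℕ, I.sup id ≤ n → (dP m I n : ℚ) = p.eval (n : ℚ) := by
  classical
  refine ⟨∑ J ∈ I.powerset, (-1 : ℚ) ^ ((I \ J).card) •
    (∑ k ∈ Finset.range (I.sup id + 1), (gJ m J k : ℚ) •
      ((Nat.factorial k : ℚ)⁻¹ • descPochhammer ℚ k)), ?_⟩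
  intro n hn
  have h1 : (dP m I n : ℚ)
      = ∑ J ∈ I.powerset, (-1 : ℚ) ^ ((I \ J).card) * ((eeF m n J).card : ℚ) := by
    rw [dP_eq_dd]
    have h0 := congrArg (fun z : ℤ => (z : ℚ)) (dd_eq_IE m n I)
    push_cast at h0
    exact h0
  have h2 : ∀ J ∈ I.powerset, ((eeF m n J).card : ℚ)
      = ∑ k ∈ Finset.range (I.sup id + 1), (gJ m J k : ℚ) * (n.choose k : ℚ) := by
    intro J hJ
    rw [Finset.mem_powerset] at hJ
    have hposJ : ∀ x ∈ J, 1 ≤ x := fun x hx => hIpos x (hJ hx)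
    have hsupJ : alphaVal J J.card ≤ I.sup id :=
      le_trans (alphaVal_le_sup le_rfl) (Finset.sup_mono hJ)
    have hnm : n ≤ n * m := Nat.le_mul_of_pos_right n (by omega)
    have hβL : alphaVal J J.card ≤ n * m := le_trans hsupJ (le_trans hn hnm)
    rw [ee_card_eq_MatB hposJ hβL, MatB_card]
    have htr : (∑ k ∈ Finset.range (n + 1), n.choose k * gJ m J k)
        = ∑ k ∈ Finset.range (I.sup id + 1), n.choose k * gJ m J k := by
      symm
      apply Finset.sum_subset
      · exact Finset.range_subset_range.2 (by omega)
      · intro k hk1 hk2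
        rw [Finset.mem_range] at hk1 hk2
        rw [gJ_eq_zero hposJ (by omega), mul_zero]
    rw [htr]
    push_cast
    exact Finset.sum_congr rfl fun k _ => by ring
  rw [h1, Polynomial.eval_finset_sum]
  refine Finset.sum_congr rfl fun J hJ => ?_
  rw [h2 J hJ, Polynomial.eval_smul, smul_eq_mul]
  congr 1
  rw [Polynomial.eval_finset_sum]
  refine Finset.sum_congr rfl fun k _ => ?_
  rw [Polynomial.eval_smul, Polynomial.eval_smul, smul_eq_mul, smul_eq_mul,
    descPochhammer_eval_eq_descFactorial, Nat.descFactorial_eq_factorial_mul_choose]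
  have hfac : (Nat.factorial k : ℚ) ≠ 0 := Nat.cast_ne_zero.2 (Nat.factorial_ne_zero k)
  push_cast
  field_simp
end

section
/- For every positive integer n and every integer i ≥ 0, the number of sequences v = (v_1,…,v_{α_t}) with entries in {1,…,n} such that Des(v) = I \ {α_t}, v_{α_t} ≠ 1, and exactly i distinct numbers from {2,…,n} appear in v, equals C(n−1, i) · b_i(I), where C(n−1,i) is the binomial coefficient. -/
open Finset

def relabel (S : Finset ℕ) (x : ℕ) : ℕ := 1 + (S.filter (· ≤ x)).card

noncomputable def unrelabel (S : Finset ℕ) (m : ℕ) : ℕ :=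
  if h : ∃ s ∈ S, relabel S s = m then h.choose else 1

lemma relabel_mono (S : Finset ℕ) : Monotone (relabel S) := by
  intro x y hxy
  exact Nat.add_le_add_left (Finset.card_le_card (fun a ha => by
    simp only [mem_filter] at *; exact ⟨ha.1, ha.2.trans hxy⟩)) 1

lemma relabel_pos (S : Finset ℕ) (x : ℕ) : 1 ≤ relabel S x := Nat.le_add_right 1 _

lemma relabel_le (S : Finset ℕ) (x : ℕ) : relabel S x ≤ S.card + 1 := by
  have := Finset.card_le_card (Finset.filter_subset (· ≤ x) S)
  unfold relabel; omega

lemma relabel_one (S : Finset ℕ) (hS2 : ∀ s ∈ S, 2 ≤ s) : relabel S 1 = 1 := by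
  unfold relabel
  have : S.filter (· ≤ 1) = ∅ := by
    apply Finset.filter_eq_empty_iff.2
    intro s hs; have := hS2 s hs; simp; omega
  simp [this]

lemma relabel_ge_two (S : Finset ℕ) {s : ℕ} (hs : s ∈ S) : 2 ≤ relabel S s := by
  have : s ∈ S.filter (· ≤ s) := by simp [hs]
  have := Finset.card_pos.2 ⟨s, this⟩
  unfold relabel; omega

lemma relabel_strict (S : Finset ℕ) (hS2 : ∀ s ∈ S, 2 ≤ s) {x y : ℕ}
    (hx : x ∈ insert 1 S) (hy : y ∈ insert 1 S) (hxy : x < y) :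
    relabel S x < relabel S y := by
  have hx1 : 1 ≤ x := by rcases Finset.mem_insert.1 hx with h | h; omega; exact le_trans (by norm_num) (hS2 x h)
  have hyS : y ∈ S := by
    rcases Finset.mem_insert.1 hy with h | h; omega; exact h
  have hss : S.filter (· ≤ x) ⊂ S.filter (· ≤ y) := by
    constructor
    · intro a ha; simp only [mem_filter] at *; exact ⟨ha.1, le_trans ha.2 (le_of_lt hxy)⟩
    · intro h
      have : y ∈ S.filter (· ≤ x) := h (by simp [hyS])
      simp only [mem_filter] at this; omega
  exact Nat.add_lt_add_left (Finset.card_lt_card hss) 1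

lemma relabel_lt_iff (S : Finset ℕ) (hS2 : ∀ s ∈ S, 2 ≤ s) {x y : ℕ}
    (hx : x ∈ insert 1 S) (hy : y ∈ insert 1 S) :
    relabel S x < relabel S y ↔ x < y := by
  constructor
  · intro h
    by_contra hc
    exact absurd (relabel_mono S (not_lt.1 hc)) (not_le.2 h)
  · exact relabel_strict S hS2 hx hy

lemma relabel_injOn (S : Finset ℕ) (hS2 : ∀ s ∈ S, 2 ≤ s) {x y : ℕ}
    (hx : x ∈ insert 1 S) (hy : y ∈ insert 1 S) (h : relabel S x = relabel S y) : x = y := by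
  rcases lt_trichotomy x y with hc | hc | hc
  · exact absurd (relabel_strict S hS2 hx hy hc) (by omega)
  · exact hc
  · exact absurd (relabel_strict S hS2 hy hx hc) (by omega)

lemma relabel_image (S : Finset ℕ) (hS2 : ∀ s ∈ S, 2 ≤ s) :
    S.image (relabel S) = Finset.Icc 2 (S.card + 1) := by
  apply Finset.eq_of_subset_of_card_le
  · intro m hm
    rcases Finset.mem_image.1 hm with ⟨s, hs, rfl⟩
    exact Finset.mem_Icc.2 ⟨relabel_ge_two S hs, relabel_le S s⟩
  · rw [Finset.card_image_of_injOn (fun x hx y hy h =>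
      relabel_injOn S hS2 (Finset.mem_insert_of_mem hx) (Finset.mem_insert_of_mem hy) h)]
    rw [Nat.card_Icc]; omega

lemma relabel_surj (S : Finset ℕ) (hS2 : ∀ s ∈ S, 2 ≤ s) {m : ℕ}
    (hm : m ∈ Finset.Icc 2 (S.card + 1)) : ∃ s ∈ S, relabel S s = m := by
  rw [← relabel_image S hS2] at hm
  exact Finset.mem_image.1 hm

lemma unrelabel_spec {S : Finset ℕ} {m : ℕ} (h : ∃ s ∈ S, relabel S s = m) :
    unrelabel S m ∈ S ∧ relabel S (unrelabel S m) = m := by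
  rw [unrelabel, dif_pos h]
  exact ⟨h.choose_spec.1, h.choose_spec.2⟩

lemma unrelabel_one (S : Finset ℕ) : unrelabel S 1 = 1 := by
  rw [unrelabel, dif_neg]
  rintro ⟨s, hs, h⟩
  have := relabel_ge_two S hs; omega

lemma unrelabel_relabel (S : Finset ℕ) (hS2 : ∀ s ∈ S, 2 ≤ s) {x : ℕ}
    (hx : x ∈ insert 1 S) : unrelabel S (relabel S x) = x := by
  rcases Finset.mem_insert.1 hx with rfl | h
  · rw [relabel_one S hS2, unrelabel_one]
  · have hex : ∃ s ∈ S, relabel S s = relabel S x := ⟨x, h, rfl⟩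
    obtain ⟨h1, h2⟩ := unrelabel_spec hex
    exact relabel_injOn S hS2 (Finset.mem_insert_of_mem h1) hx h2

lemma seqs_finite (ℓ n : ℕ) : (Seqs ℓ n).Finite := by
  apply Set.Finite.of_finite_image
    (f := fun v (k : Fin (ℓ + 1)) => (⟨min (v k.val) n, by omega⟩ : Fin (n + 1)))
    (Set.toFinite _)
  intro v hv v' hv' h
  funext k
  by_cases hk : k ∈ Finset.Icc 1 ℓ
  · have hk' : k < ℓ + 1 := by
      have := Finset.mem_Icc.1 hk; omega
    have h1 := congrFun h ⟨k, hk'⟩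
    simp only [Fin.mk.injEq] at h1
    have h2 := (Finset.mem_Icc.1 (hv.1 k hk)).2
    have h3 := (Finset.mem_Icc.1 (hv'.1 k hk)).2
    simpa [Nat.min_eq_left h2, Nat.min_eq_left h3] using h1
  · rw [hv.2 k hk, hv'.2 k hk]

lemma cardAS (I : Finset ℕ) (hI : I.Nonempty) (hIpos : ∀ x ∈ I, 1 ≤ x)
    (n : ℕ) (hn : 1 ≤ n) (i : ℕ) (S : Finset ℕ) (hS : S ⊆ Finset.Icc 2 n) (hSc : S.card = i) :
    Set.ncard {v ∈ Seqs (I.sup id) n |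
      Des (I.sup id) v = ↑(I.erase (I.sup id)) ∧ v (I.sup id) ≠ 1 ∧
      {l | l ∈ Finset.Icc 2 n ∧ ∃ k ∈ Finset.Icc 1 (I.sup id), v k = l} = ↑S} =
    bcoef I i := by
  classical
  set L := I.sup id with hLdef
  have hL : 1 ≤ L := by
    obtain ⟨a, ha⟩ := hI
    exact le_trans (hIpos a ha) (Finset.le_sup (f := id) ha)
  have hS2 : ∀ s ∈ S, 2 ≤ s := fun s hs => (Finset.mem_Icc.1 (hS hs)).1
  set A : Set (ℕ → ℕ) := {v ∈ Seqs L n |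
      Des L v = ↑(I.erase L) ∧ v L ≠ 1 ∧
      {l | l ∈ Finset.Icc 2 n ∧ ∃ k ∈ Finset.Icc 1 L, v k = l} = ↑S} with hAdef
  set B : Set (ℕ → ℕ) := {v ∈ Seqs L (i + 1) |
      Des L v = ↑(I.erase L) ∧
      (∀ l ∈ Finset.Icc 2 (i + 1), ∃ j ∈ Finset.Icc 1 L, v j = l) ∧
      v L ≠ 1} with hBdef
  set Φ : (ℕ → ℕ) → (ℕ → ℕ) :=
    fun v k => if k ∈ Finset.Icc 1 L then relabel S (v k) else 0 with hΦdef
  -- entries of v ∈ A lie in insert 1 S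
  have hentries : ∀ v ∈ A, ∀ k ∈ Finset.Icc 1 L, v k ∈ insert 1 S := by
    intro v hv k hk
    obtain ⟨hseq, _, _, hfilt⟩ := hv
    have h1 := Finset.mem_Icc.1 (hseq.1 k hk)
    by_cases hvk : v k = 1
    · simp [hvk]
    · have hm : v k ∈ ({l | l ∈ Finset.Icc 2 n ∧ ∃ k ∈ Finset.Icc 1 L, v k = l} : Set ℕ) :=
        ⟨Finset.mem_Icc.2 ⟨by omega, h1.2⟩, ⟨k, hk, rfl⟩⟩
      rw [hfilt] at hm
      exact Finset.mem_insert_of_mem hm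
  have hinj : Set.InjOn Φ A := by
    intro v hv v' hv' h
    funext k
    by_cases hk : k ∈ Finset.Icc 1 L
    · have h1 := congrFun h k
      simp only [hΦdef, if_pos hk] at h1
      exact relabel_injOn S hS2 (hentries v hv k hk) (hentries v' hv' k hk) h1
    · rw [hv.1.2 k hk, hv'.1.2 k hk]
  have himg : Φ '' A = B := by
    apply Set.eq_of_subset_of_subset
    · rintro w ⟨v, hv, rfl⟩
      obtain ⟨hseq, hdes, hne1, hfilt⟩ := hv
      have hent := hentries v ⟨hseq, hdes, hne1, hfilt⟩
      refine ⟨⟨?_, ?_⟩, ?_, ?_, ?_⟩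
      · intro k hk
        simp only [hΦdef, if_pos hk]
        exact Finset.mem_Icc.2 ⟨relabel_pos S _, by have := relabel_le S (v k); omega⟩
      · intro k hk
        simp only [hΦdef, if_neg hk]
      · have : Des L (Φ v) = Des L v := by
          ext k
          simp only [Des, Set.mem_setOf_eq]
          constructor
          · rintro ⟨h1, h2, h3⟩
            refine ⟨h1, h2, ?_⟩
            have hk1 : k ∈ Finset.Icc 1 L := Finset.mem_Icc.2 ⟨h1, by omega⟩
            have hk2 : k + 1 ∈ Finset.Icc 1 L := Finset.mem_Icc.2 ⟨by omega, by omega⟩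
            simp only [hΦdef, if_pos hk1, if_pos hk2] at h3
            exact (relabel_lt_iff S hS2 (hent _ hk2) (hent _ hk1)).1 h3
          · rintro ⟨h1, h2, h3⟩
            refine ⟨h1, h2, ?_⟩
            have hk1 : k ∈ Finset.Icc 1 L := Finset.mem_Icc.2 ⟨h1, by omega⟩
            have hk2 : k + 1 ∈ Finset.Icc 1 L := Finset.mem_Icc.2 ⟨by omega, by omega⟩
            simp only [hΦdef, if_pos hk1, if_pos hk2]
            exact (relabel_lt_iff S hS2 (hent _ hk2) (hent _ hk1)).2 h3
        rw [this, hdes]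
      · intro l hl
        rw [← hSc] at hl
        obtain ⟨s, hsS, hfs⟩ := relabel_surj S hS2 hl
        have hsfilt : s ∈ ({l | l ∈ Finset.Icc 2 n ∧ ∃ k ∈ Finset.Icc 1 L, v k = l} : Set ℕ) := by
          rw [hfilt]; exact hsS
        obtain ⟨-, k, hk, hvk⟩ := hsfilt
        exact ⟨k, hk, by simp only [hΦdef, if_pos hk, hvk, hfs]⟩
      · have hLmem : L ∈ Finset.Icc 1 L := Finset.mem_Icc.2 ⟨hL, le_refl L⟩
        simp only [hΦdef, if_pos hLmem]
        have : v L ∈ S := by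
          rcases Finset.mem_insert.1 (hent L hLmem) with h | h
          · exact absurd h hne1
          · exact h
        have := relabel_ge_two S this
        omega
    · intro w hw
      obtain ⟨hseq, hdes, hsurj, hne1⟩ := hw
      set v : ℕ → ℕ := fun k => if k ∈ Finset.Icc 1 L then unrelabel S (w k) else 0
        with hvdef
      have key : ∀ k ∈ Finset.Icc 1 L, v k ∈ insert 1 S ∧ relabel S (v k) = w k := by
        intro k hk
        have h1 := Finset.mem_Icc.1 (hseq.1 k hk)
        by_cases hwk : w k = 1
        · simp only [hvdef, if_pos hk, hwk, unrelabel_one]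
          exact ⟨Finset.mem_insert_self 1 S, relabel_one S hS2⟩
        · have hm : w k ∈ Finset.Icc 2 (S.card + 1) := by
            rw [hSc]; exact Finset.mem_Icc.2 ⟨by omega, h1.2⟩
          obtain ⟨hmem, hrel⟩ := unrelabel_spec (relabel_surj S hS2 hm)
          simp only [hvdef, if_pos hk]
          exact ⟨Finset.mem_insert_of_mem hmem, hrel⟩
      refine ⟨v, ⟨⟨?_, ?_⟩, ?_, ?_, ?_⟩, ?_⟩
      · intro k hk
        obtain ⟨hmem, -⟩ := key k hk
        rcases Finset.mem_insert.1 hmem with h | h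
        · rw [h]; exact Finset.mem_Icc.2 ⟨le_refl 1, hn⟩
        · have := Finset.mem_Icc.1 (hS h)
          exact Finset.mem_Icc.2 ⟨by omega, this.2⟩
      · intro k hk
        simp only [hvdef, if_neg hk]
      · have : Des L v = Des L w := by
          ext k
          simp only [Des, Set.mem_setOf_eq]
          constructor
          · rintro ⟨h1, h2, h3⟩
            refine ⟨h1, h2, ?_⟩
            have hk1 : k ∈ Finset.Icc 1 L := Finset.mem_Icc.2 ⟨h1, by omega⟩
            have hk2 : k + 1 ∈ Finset.Icc 1 L := Finset.mem_Icc.2 ⟨by omega, by omega⟩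
            rw [← (key k hk1).2, ← (key (k+1) hk2).2]
            exact (relabel_lt_iff S hS2 (key _ hk2).1 (key _ hk1).1).2 h3
          · rintro ⟨h1, h2, h3⟩
            refine ⟨h1, h2, ?_⟩
            have hk1 : k ∈ Finset.Icc 1 L := Finset.mem_Icc.2 ⟨h1, by omega⟩
            have hk2 : k + 1 ∈ Finset.Icc 1 L := Finset.mem_Icc.2 ⟨by omega, by omega⟩
            rw [← (key k hk1).2, ← (key (k+1) hk2).2] at h3
            exact (relabel_lt_iff S hS2 (key _ hk2).1 (key _ hk1).1).1 h3
        rw [this, hdes]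
      · have hLmem : L ∈ Finset.Icc 1 L := Finset.mem_Icc.2 ⟨hL, le_refl L⟩
        intro hvL
        apply hne1
        rw [← (key L hLmem).2, hvL, relabel_one S hS2]
      · ext l
        simp only [Set.mem_setOf_eq, Finset.mem_coe]
        constructor
        · rintro ⟨hl2, k, hk, hvk⟩
          have hl2' := Finset.mem_Icc.1 hl2
          rcases Finset.mem_insert.1 (key k hk).1 with h | h
          · omega
          · rwa [← hvk]
        · intro hl
          have hli : relabel S l ∈ Finset.Icc 2 (i + 1) := by
            refine Finset.mem_Icc.2 ⟨relabel_ge_two S hl, ?_⟩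
            have := relabel_le S l; omega
          obtain ⟨k, hk, hwk⟩ := hsurj _ hli
          refine ⟨hS hl, k, hk, ?_⟩
          simp only [hvdef, if_pos hk, hwk]
          exact unrelabel_relabel S hS2 (Finset.mem_insert_of_mem hl)
      · funext k
        by_cases hk : k ∈ Finset.Icc 1 L
        · simp only [hΦdef, if_pos hk]
          exact (key k hk).2
        · simp only [hΦdef, if_neg hk]
          exact (hseq.2 k hk).symm
  rw [bcoef, ← hLdef, ← hBdef, ← himg, Set.ncard_image_of_injOn hinj]

/-- for a positive integer `n` and `i ≥ 0`, the number of sequences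
`v = (v_1,…,v_{α_t})` with entries in `{1,…,n}`, `Des v = I \ {α_t}`, `v_{α_t} ≠ 1`,
in which exactly `i` distinct numbers from `{2,…,n}` appear, equals `C(n-1, i) · b_i(I)`. -/
theorem stmt_10 (I : Finset ℕ) (hI : I.Nonempty) (hIpos : ∀ x ∈ I, 1 ≤ x)
    (n : ℕ) (hn : 1 ≤ n) (i : ℕ) :
    Set.ncard {v ∈ Seqs (I.sup id) n |
      Des (I.sup id) v = ↑(I.erase (I.sup id)) ∧ v (I.sup id) ≠ 1 ∧
      Set.ncard {l | l ∈ Finset.Icc 2 n ∧ ∃ k ∈ Finset.Icc 1 (I.sup id), v k = l} = i} =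
    (n - 1).choose i * bcoef I i := by
  classical
  set L := I.sup id with hLdef
  have hsetfin : ∀ v : ℕ → ℕ,
      {l | l ∈ Finset.Icc 2 n ∧ ∃ k ∈ Finset.Icc 1 L, v k = l}.Finite :=
    fun v => Set.Finite.subset (Finset.Icc 2 n).finite_toSet (fun l hl => hl.1)
  set A : Finset ℕ → Set (ℕ → ℕ) := fun S => {v ∈ Seqs L n |
      Des L v = ↑(I.erase L) ∧ v L ≠ 1 ∧
      {l | l ∈ Finset.Icc 2 n ∧ ∃ k ∈ Finset.Icc 1 L, v k = l} = ↑S} with hAdef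
  have hAfin : ∀ S : Finset ℕ, (A S).Finite := fun S =>
    (seqs_finite L n).subset (fun v hv => hv.1)
  set 𝒮 := (Finset.Icc 2 n).powersetCard i with h𝒮
  set bigA : Set (ℕ → ℕ) := {v ∈ Seqs L n |
      Des L v = ↑(I.erase L) ∧ v L ≠ 1 ∧
      Set.ncard {l | l ∈ Finset.Icc 2 n ∧ ∃ k ∈ Finset.Icc 1 L, v k = l} = i} with hbigdef
  have hbigfin : bigA.Finite := (seqs_finite L n).subset (fun v hv => hv.1)
  rw [Set.ncard_eq_toFinset_card _ hbigfin]
  have hdecomp : hbigfin.toFinset = 𝒮.biUnion (fun S => (hAfin S).toFinset) := by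
    ext v
    simp only [Set.Finite.mem_toFinset, Finset.mem_biUnion]
    constructor
    · rintro ⟨hseq, hdes, hne1, hcard⟩
      refine ⟨(hsetfin v).toFinset, ?_, ?_⟩
      · refine Finset.mem_powersetCard.2 ⟨?_, ?_⟩
        · intro l hl
          exact ((hsetfin v).mem_toFinset.1 hl).1
        · rw [← Set.ncard_eq_toFinset_card _ (hsetfin v)]
          exact hcard
      · exact ⟨hseq, hdes, hne1, ((hsetfin v).coe_toFinset).symm⟩
    · rintro ⟨S, hS𝒮, hseq, hdes, hne1, hfilt⟩
      refine ⟨hseq, hdes, hne1, ?_⟩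
      rw [hfilt, Set.ncard_coe_finset]
      exact (Finset.mem_powersetCard.1 hS𝒮).2
  rw [hdecomp, Finset.card_biUnion]
  · have hval : ∀ S ∈ 𝒮, ((hAfin S).toFinset).card = bcoef I i := by
      intro S hS𝒮
      obtain ⟨hsub, hcard⟩ := Finset.mem_powersetCard.1 hS𝒮
      rw [← Set.ncard_eq_toFinset_card _ (hAfin S)]
      exact cardAS I hI hIpos n hn i S hsub hcard
    rw [Finset.sum_congr rfl hval, Finset.sum_const, smul_eq_mul]
    congr 1
    rw [h𝒮, Finset.card_powersetCard, Nat.card_Icc]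
    have h2 : n + 1 - 2 = n - 1 := by omega
    rw [h2]
  · intro S hS S' hS' hne
    rw [Function.onFun, Finset.disjoint_left]
    intro v hv hv'
    apply hne
    apply Finset.coe_injective
    rw [← ((hAfin S).mem_toFinset.1 hv).2.2.2, ← ((hAfin S').mem_toFinset.1 hv').2.2.2]
end

section
/- For every positive integer n, N(I,n) = Σ_{i=0}^{α_t} b_i(I) · C(n−1, i), where C(n−1,i) is the binomial coefficient. -/
open Finset

def Vals (ℓ : ℕ) (v : ℕ → ℕ) : Finset ℕ :=
  ((Finset.Icc 1 ℓ).image v).filter (fun x => 2 ≤ x)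

lemma des_comp {f : ℕ → ℕ} {m ℓ : ℕ} (hf : StrictMonoOn f (Set.Icc 1 m))
    {w : ℕ → ℕ} (hw : ∀ j ∈ Finset.Icc 1 ℓ, w j ∈ Finset.Icc 1 m) :
    Des ℓ (f ∘ w) = Des ℓ w := by
  have key : ∀ k, 1 ≤ k → k < ℓ → (f (w (k+1)) < f (w k) ↔ w (k+1) < w k) := by
    intro k h1 h2
    have ha : w (k+1) ∈ Set.Icc 1 m := by
      have := hw (k+1) (Finset.mem_Icc.mpr ⟨by omega, by omega⟩)
      simpa [Set.mem_Icc, Finset.mem_Icc] using this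
    have hb : w k ∈ Set.Icc 1 m := by
      have := hw k (Finset.mem_Icc.mpr ⟨h1, by omega⟩)
      simpa [Set.mem_Icc, Finset.mem_Icc] using this
    exact hf.lt_iff_lt ha hb
  ext k
  simp only [Des, Set.mem_setOf_eq, Function.comp]
  constructor
  · rintro ⟨h1, h2, h3⟩; exact ⟨h1, h2, (key k h1 h2).1 h3⟩
  · rintro ⟨h1, h2, h3⟩; exact ⟨h1, h2, (key k h1 h2).2 h3⟩

lemma relabel_s11 (ℓ n : ℕ) (hℓ : 1 ≤ ℓ) (hn : 1 ≤ n) (J : Set ℕ) (S : Finset ℕ)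
    (hS : S ⊆ Finset.Icc 2 n) :
    {v ∈ Seqs ℓ n | (Des ℓ v = J ∧ v ℓ ≠ 1) ∧ Vals ℓ v = S}.ncard
    = {v ∈ Seqs ℓ (S.card + 1) | Des ℓ v = J ∧
        (∀ l ∈ Finset.Icc 2 (S.card + 1), ∃ j ∈ Finset.Icc 1 ℓ, v j = l) ∧
        v ℓ ≠ 1}.ncard := by
  classical
  set i := S.card with hi
  set s := S.sort (· ≤ ·) with hs
  have hslen : s.length = i := Finset.length_sort _
  have hmemS : ∀ k, k < i → s.getD k 0 ∈ S := by
    intro k h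
    rw [List.getD_eq_getElem _ _ (by omega)]
    exact (Finset.mem_sort _).mp (List.getElem_mem _)
  set f : ℕ → ℕ := fun j => if j ≤ 1 then j else s.getD (j - 2) 0 with hfdef
  set g : ℕ → ℕ := fun x => if x ≤ 1 then x else 2 + s.idxOf x with hgdef
  have hfS : ∀ j, 2 ≤ j → j ≤ i + 1 → f j ∈ S := by
    intro j h2 h3
    have : f j = s.getD (j - 2) 0 := if_neg (by omega)
    rw [this]; exact hmemS _ (by omega)
  have hS2 : ∀ x ∈ S, 2 ≤ x ∧ x ≤ n := fun x hx => Finset.mem_Icc.mp (hS hx)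
  have hmono : StrictMonoOn f (Set.Icc 1 (i+1)) := by
    intro a ha b hb hab
    simp only [Set.mem_Icc] at ha hb
    rcases Nat.lt_or_ge a 2 with h2 | h2
    · have hfa : f a = a := if_pos (by omega)
      have hfb : f b ∈ S := hfS b (by omega) hb.2
      have := (hS2 _ hfb).1
      omega
    · have h2b : 2 ≤ b := by omega
      show f a < f b
      simp only [hfdef, if_neg (by omega : ¬ a ≤ 1), if_neg (by omega : ¬ b ≤ 1)]
      rw [List.getD_eq_getElem _ _ (by omega : a - 2 < s.length),
        List.getD_eq_getElem _ _ (by omega : b - 2 < s.length)]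
      have := (Finset.sortedLT_sort S).strictMono_get
        (show (⟨a-2, by omega⟩ : Fin s.length) < ⟨b-2, by omega⟩ by
          simp only [Fin.lt_def]; omega)
      simpa [List.get_eq_getElem] using this
  have hgf : ∀ a, a ≤ i + 1 → g (f a) = a := by
    intro a ha
    rcases Nat.lt_or_ge a 2 with h2 | h2
    · have hfa : f a = a := if_pos (by omega)
      rw [hfa]; exact if_pos (by omega)
    · have hfa : f a = s.getD (a-2) 0 := if_neg (by omega)
      have hlt : a - 2 < s.length := by omega
      have hmem2 : f a ∈ S := hfS a h2 ha
      have h2fa : 2 ≤ f a := (hS2 _ hmem2).1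
      have : g (f a) = 2 + s.idxOf (f a) := if_neg (by omega)
      rw [this, hfa, List.getD_eq_getElem _ _ hlt,
        List.Nodup.idxOf_getElem (Finset.sort_nodup _ _) _ hlt]
      omega
  have hfg : ∀ x ∈ S, f (g x) = x := by
    intro x hx
    have h2x := (hS2 _ hx).1
    have hxs : x ∈ s := (Finset.mem_sort _).mpr hx
    have hidx : s.idxOf x < s.length := List.idxOf_lt_length_iff.mpr hxs
    have hgx : g x = 2 + s.idxOf x := if_neg (by omega)
    rw [hgx]
    have : f (2 + s.idxOf x) = s.getD (2 + s.idxOf x - 2) 0 := if_neg (by omega)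
    rw [this, show 2 + s.idxOf x - 2 = s.idxOf x by omega,
      List.getD_eq_getElem _ _ hidx, List.getElem_idxOf hidx]
  have hgS : ∀ x ∈ S, 2 ≤ g x ∧ g x ≤ i + 1 := by
    intro x hx
    have h2x := (hS2 _ hx).1
    have hxs : x ∈ s := (Finset.mem_sort _).mpr hx
    have hidx : s.idxOf x < s.length := List.idxOf_lt_length_iff.mpr hxs
    have hgx : g x = 2 + s.idxOf x := if_neg (by omega)
    omega
  set A := {v ∈ Seqs ℓ n | (Des ℓ v = J ∧ v ℓ ≠ 1) ∧ Vals ℓ v = S} with hA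
  set B := {v ∈ Seqs ℓ (i + 1) | Des ℓ v = J ∧
        (∀ l ∈ Finset.Icc 2 (i + 1), ∃ j ∈ Finset.Icc 1 ℓ, v j = l) ∧
        v ℓ ≠ 1} with hB
  have hmaps : ∀ w ∈ B, (f ∘ w) ∈ A := by
    rintro w ⟨⟨hw1, hw0⟩, hdes, hsurj, hne⟩
    have hwb : ∀ j ∈ Finset.Icc 1 ℓ, 1 ≤ w j ∧ w j ≤ i + 1 := by
      intro j hj; exact Finset.mem_Icc.mp (hw1 j hj)
    have hℓmem : ℓ ∈ Finset.Icc 1 ℓ := Finset.mem_Icc.mpr ⟨hℓ, le_refl _⟩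
    have hfval : ∀ j ∈ Finset.Icc 1 ℓ, (w j = 1 ∧ f (w j) = 1) ∨ (2 ≤ w j ∧ f (w j) ∈ S) := by
      intro j hj
      rcases Nat.lt_or_ge (w j) 2 with h | h
      · left
        have h1 : w j = 1 := by have := hwb j hj; omega
        exact ⟨h1, by rw [h1]; exact if_pos (by omega)⟩
      · right; exact ⟨h, hfS _ h (hwb j hj).2⟩
    refine ⟨⟨?_, ?_⟩, ⟨?_, ?_⟩, ?_⟩
    · intro j hj
      rcases hfval j hj with ⟨_, h⟩ | ⟨_, h⟩
      · simp only [Function.comp_apply]; rw [h]; exact Finset.mem_Icc.mpr ⟨le_refl _, hn⟩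
      · have := hS2 _ h
        show f (w j) ∈ Finset.Icc 1 n
        exact Finset.mem_Icc.mpr ⟨by omega, by omega⟩
    · intro j hj
      simp only [Function.comp_apply]
      rw [hw0 j hj]
      exact if_pos (by omega)
    · rw [des_comp hmono hw1, hdes]
    · rcases hfval ℓ hℓmem with ⟨h1, _⟩ | ⟨_, h⟩
      · exact absurd h1 hne
      · have := (hS2 _ h).1
        simp only [Function.comp_apply]
        omega
    · ext x
      simp only [Vals, Finset.mem_filter, Finset.mem_image, Function.comp]
      constructor
      · rintro ⟨⟨j, hj, hx⟩, h2x⟩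
        rcases hfval j hj with ⟨_, h⟩ | ⟨_, h⟩
        · omega
        · rwa [← hx]
      · intro hx
        have hxs : x ∈ s := (Finset.mem_sort _).mpr hx
        have hidx : s.idxOf x < i := by
          have := List.idxOf_lt_length_iff.mpr hxs; omega
        set k := s.idxOf x with hk
        have hfx : f (k + 2) = x := by
          have : f (k + 2) = s.getD (k + 2 - 2) 0 := if_neg (by omega)
          rw [this, show k + 2 - 2 = k from by omega,
            List.getD_eq_getElem _ _ (by omega), List.getElem_idxOf (by omega)]
        obtain ⟨j, hj, hwj⟩ := hsurj (k + 2) (Finset.mem_Icc.mpr ⟨by omega, by omega⟩)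
        exact ⟨⟨j, hj, by rw [hwj, hfx]⟩, (hS2 _ hx).1⟩
  have hinj : Set.InjOn (fun w => f ∘ w) B := by
    rintro w1 ⟨⟨h11, h10⟩, -⟩ w2 ⟨⟨h21, h20⟩, -⟩ h
    funext j
    by_cases hj : j ∈ Finset.Icc 1 ℓ
    · have e1 : g (f (w1 j)) = w1 j := hgf _ (Finset.mem_Icc.mp (h11 j hj)).2
      have e2 : g (f (w2 j)) = w2 j := hgf _ (Finset.mem_Icc.mp (h21 j hj)).2
      have : f (w1 j) = f (w2 j) := congrFun h j
      rw [← e1, ← e2, this]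
    · rw [h10 j hj, h20 j hj]
  have hsurjOn : Set.SurjOn (fun w => f ∘ w) B A := by
    rintro v ⟨⟨hv1, hv0⟩, ⟨hdes, hne⟩, hVals⟩
    have hℓmem : ℓ ∈ Finset.Icc 1 ℓ := Finset.mem_Icc.mpr ⟨hℓ, le_refl _⟩
    have hvS : ∀ j ∈ Finset.Icc 1 ℓ, v j = 1 ∨ v j ∈ S := by
      intro j hj
      have h1 := (Finset.mem_Icc.mp (hv1 j hj)).1
      rcases Nat.lt_or_ge (v j) 2 with h | h
      · left; omega
      · right
        rw [← hVals]
        exact Finset.mem_filter.mpr ⟨Finset.mem_image.mpr ⟨j, hj, rfl⟩, h⟩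
    have hg1 : g 1 = 1 := if_pos (by omega)
    have hgv1 : ∀ j ∈ Finset.Icc 1 ℓ, (g ∘ v) j ∈ Finset.Icc 1 (i + 1) := by
      intro j hj
      rcases hvS j hj with h | h
      · simp only [Function.comp_apply]; rw [h, hg1]
        exact Finset.mem_Icc.mpr ⟨le_refl _, by omega⟩
      · have := hgS _ h
        show g (v j) ∈ Finset.Icc 1 (i + 1)
        exact Finset.mem_Icc.mpr ⟨by omega, by omega⟩
    have hfgv : f ∘ (g ∘ v) = v := by
      funext j
      by_cases hj : j ∈ Finset.Icc 1 ℓ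
      · rcases hvS j hj with h | h
        · simp only [Function.comp_apply]; rw [h, hg1]; exact if_pos (by omega)
        · simp only [Function.comp_apply]; rw [hfg _ h]
      · simp only [Function.comp_apply]
        rw [hv0 j hj]
        have hg0 : g 0 = 0 := if_pos (by omega)
        rw [hg0]; exact if_pos (by omega)
    refine ⟨g ∘ v, ⟨⟨hgv1, ?_⟩, ?_, ?_, ?_⟩, hfgv⟩
    · intro j hj
      simp only [Function.comp_apply]
      rw [hv0 j hj]; exact if_pos (by omega)
    · have := des_comp hmono hgv1
      rw [hfgv] at this
      rw [← this, hdes]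
    · intro l hl
      obtain ⟨h2l, hli⟩ := Finset.mem_Icc.mp hl
      have hfl : f l ∈ S := hfS l h2l hli
      have : f l ∈ Vals ℓ v := by rw [hVals]; exact hfl
      obtain ⟨hmem', -⟩ := Finset.mem_filter.mp this
      obtain ⟨j, hj, hvj⟩ := Finset.mem_image.mp hmem'
      refine ⟨j, hj, ?_⟩
      simp only [Function.comp_apply]
      rw [hvj]
      exact hgf l hli
    · rcases hvS ℓ hℓmem with h | h
      · exact absurd h hne
      · have := hgS _ h
        simp only [Function.comp_apply]
        omega
  have hbij : Set.BijOn (fun w => f ∘ w) B A := ⟨hmaps, hinj, hsurjOn⟩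
  rw [← hbij.image_eq, Set.ncard_image_of_injOn hbij.injOn]

lemma bcoef_eq_zero (I : Finset ℕ) (i : ℕ) (h : I.sup id < i) : bcoef I i = 0 := by
  classical
  have hempty : {v ∈ Seqs (I.sup id) (i + 1) |
      Des (I.sup id) v = ↑(I.erase (I.sup id)) ∧
      (∀ l ∈ Finset.Icc 2 (i + 1), ∃ j ∈ Finset.Icc 1 (I.sup id), v j = l) ∧
      v (I.sup id) ≠ 1} = ∅ := by
    rw [Set.eq_empty_iff_forall_notMem]
    intro v hv
    simp only [Set.mem_setOf_eq] at hv
    obtain ⟨hseq, hdes, hsurj, hne⟩ := hv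
    set F : ℕ → ℕ := fun l => if hl : l ∈ Finset.Icc 2 (i + 1) then (hsurj l hl).choose else 0
      with hF
    have hFspec : ∀ l (hl : l ∈ Finset.Icc 2 (i + 1)),
        F l ∈ Finset.Icc 1 (I.sup id) ∧ v (F l) = l := by
      intro l hl
      simp only [hF, dif_pos hl]
      exact ⟨(hsurj l hl).choose_spec.1, (hsurj l hl).choose_spec.2⟩
    have hcard : (Finset.Icc 1 (I.sup id)).card < (Finset.Icc 2 (i + 1)).card := by
      simp only [Nat.card_Icc]; omega
    obtain ⟨a, ha, b, hb, hab, hfab⟩ :=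
      Finset.exists_ne_map_eq_of_card_lt_of_maps_to hcard (fun l hl => (hFspec l hl).1)
    apply hab
    rw [← (hFspec a ha).2, ← (hFspec b hb).2, hfab]
  rw [bcoef, hempty, Set.ncard_empty]

/-- for every positive integer `n`,
`N(I,n) = Σ_{i=0}^{α_t} b_i(I) · C(n-1, i)`. -/
theorem stmt_11 (I : Finset ℕ) (hI : I.Nonempty) (hIpos : ∀ x ∈ I, 1 ≤ x)
    (n : ℕ) (hn : 1 ≤ n) :
    Ncount I n = ∑ i ∈ Finset.range (I.sup id + 1), bcoef I i * (n - 1).choose i := by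
  classical
  set L := I.sup id with hL
  have hL1 : 1 ≤ L := by
    obtain ⟨x, hx⟩ := hI
    exact le_trans (hIpos x hx) (Finset.le_sup (f := id) hx)
  have hfin : {v ∈ Seqs L n | Des L v = ↑(I.erase L) ∧ v L ≠ 1}.Finite :=
    (seqs_finite L n).subset (fun v hv => hv.1)
  set T := hfin.toFinset with hT
  have hN : Ncount I n = T.card := by
    rw [Ncount, ← Set.ncard_coe_finset, Set.Finite.coe_toFinset]
  have hVmap : ∀ v ∈ T, Vals L v ∈ (Finset.Icc 2 n).powerset := by
    intro v hv
    rw [Set.Finite.mem_toFinset] at hv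
    obtain ⟨⟨hv1, -⟩, -⟩ := hv
    rw [Finset.mem_powerset]
    intro x hx
    obtain ⟨hmem', h2x⟩ := Finset.mem_filter.mp hx
    obtain ⟨j, hj, hxj⟩ := Finset.mem_image.mp hmem'
    have hb := Finset.mem_Icc.mp (hv1 j hj)
    subst hxj
    exact Finset.mem_Icc.mpr ⟨h2x, hb.2⟩
  have hfib := Finset.card_eq_sum_card_fiberwise hVmap
  have hfiber : ∀ S ∈ (Finset.Icc 2 n).powerset,
      (T.filter fun v => Vals L v = S).card = bcoef I S.card := by
    intro S hSmem
    have hSsub := Finset.mem_powerset.mp hSmem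
    rw [← Set.ncard_coe_finset]
    have hset : (↑(T.filter fun v => Vals L v = S) : Set (ℕ → ℕ)) =
        {v ∈ Seqs L n | (Des L v = ↑(I.erase L) ∧ v L ≠ 1) ∧ Vals L v = S} := by
      ext v
      simp only [Finset.coe_filter, Set.mem_setOf_eq, hT, Set.Finite.mem_toFinset,
        Set.mem_setOf_eq]
      tauto
    rw [hset, relabel_s11 L n hL1 hn (↑(I.erase L)) S hSsub, bcoef]
  have hcardIcc : (Finset.Icc 2 n).card = n - 1 := by
    rw [Nat.card_Icc]; omega
  rw [hN, hfib, Finset.sum_congr rfl hfiber, Finset.sum_powerset]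
  have hinner : ∀ j ∈ Finset.range ((Finset.Icc 2 n).card + 1),
      (∑ S ∈ Finset.powersetCard j (Finset.Icc 2 n), bcoef I S.card)
      = bcoef I j * (n - 1).choose j := by
    intro j _
    rw [Finset.sum_powersetCard j (Finset.Icc 2 n) (bcoef I), hcardIcc, smul_eq_mul,
      Nat.mul_comm]
  rw [Finset.sum_congr rfl hinner, hcardIcc]
  -- now: ∑ j in range (n-1+1), bcoef I j * choose (n-1) j = ∑ j in range (L+1), same
  have hthis : ∀ (a b : ℕ), (∀ j, a ≤ j → bcoef I j * (n-1).choose j = 0) →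
      (∀ j, b ≤ j → bcoef I j * (n-1).choose j = 0) →
      ∑ j ∈ Finset.range a, bcoef I j * (n-1).choose j
      = ∑ j ∈ Finset.range b, bcoef I j * (n-1).choose j := by
    intro a b ha hb
    rw [Finset.sum_subset (Finset.range_subset_range.mpr (le_max_left a b))
        (fun j _ hj => ha j (by simpa using hj)),
      Finset.sum_subset (Finset.range_subset_range.mpr (le_max_right a b))
        (fun j _ hj => hb j (by simpa using hj))]
  apply hthis
  · intro j hj
    have : (n - 1).choose j = 0 := Nat.choose_eq_zero_of_lt (by omega)
    rw [this, Nat.mul_zero]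
  · intro j hj
    rw [bcoef_eq_zero I j (by omega), Nat.zero_mul]
end

section
/- For every integer i with L ≤ i ≤ α_t, the coefficient b_i(I) is a positive integer; and for every integer i with 0 ≤ i < L or i > α_t, b_i(I) = 0. -/
open Finset

section Aux

lemma sup_mem_of_ne {I : Finset ℕ} (hI : I.Nonempty) : I.sup id ∈ I := by
  obtain ⟨a, ha, h⟩ := Finset.exists_mem_eq_sup I hI id
  rw [h]; exact ha

lemma mem_erase_lt_sup {I : Finset ℕ} {p : ℕ} (hp : p ∈ I.erase (I.sup id)) :
    p < I.sup id := by
  have h1 := Finset.mem_of_mem_erase hp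
  have h2 : id p ≤ I.sup id := Finset.le_sup h1
  have h3 := Finset.ne_of_mem_erase hp
  simp only [id] at h2
  omega

lemma longestRun_pos {I : Finset ℕ} (hI : I.Nonempty) : 1 ≤ longestRun I := by
  obtain ⟨a, ha⟩ := hI
  have hs : id a ≤ I.sup id := Finset.le_sup ha
  simp only [id] at hs
  have h1 : a ∈ (Finset.Icc a (I.sup id)).filter (fun b => Finset.Icc a b ⊆ I) := by
    simp only [Finset.mem_filter, Finset.mem_Icc]
    refine ⟨⟨le_refl a, hs⟩, ?_⟩
    intro x hx
    simp only [Finset.mem_Icc] at hx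
    have : x = a := le_antisymm hx.2 hx.1
    rwa [this]
  calc 1 ≤ ((Finset.Icc a (I.sup id)).filter (fun b => Finset.Icc a b ⊆ I)).card :=
        Finset.card_pos.mpr ⟨a, h1⟩
    _ ≤ longestRun I := by unfold longestRun; exact Finset.le_sup (f := fun a => ((Finset.Icc a (I.sup id)).filter fun b => Finset.Icc a b ⊆ I).card) ha

lemma run_le_longestRun {I : Finset ℕ} {a b : ℕ} (ha : a ∈ I)
    (hab : Finset.Icc a b ⊆ I) : b + 1 - a ≤ longestRun I := by
  rcases le_or_gt a b with h | h
  · have hbI : b ∈ I := hab (Finset.mem_Icc.mpr ⟨h, le_refl b⟩)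
    have hbs : id b ≤ I.sup id := Finset.le_sup hbI
    simp only [id] at hbs
    have hsub : Finset.Icc a b ⊆
        (Finset.Icc a (I.sup id)).filter (fun c => Finset.Icc a c ⊆ I) := by
      intro c hc
      rw [Finset.mem_Icc] at hc
      simp only [Finset.mem_filter, Finset.mem_Icc]
      refine ⟨⟨hc.1, le_trans hc.2 hbs⟩, ?_⟩
      intro x hx
      rw [Finset.mem_Icc] at hx
      exact hab (Finset.mem_Icc.mpr ⟨hx.1, le_trans hx.2 hc.2⟩)
    have h1 := Finset.card_le_card hsub
    rw [Nat.card_Icc] at h1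
    calc b + 1 - a ≤ _ := h1
      _ ≤ longestRun I := by unfold longestRun; exact Finset.le_sup (f := fun a => ((Finset.Icc a (I.sup id)).filter fun b => Finset.Icc a b ⊆ I).card) ha
  · omega

lemma exists_run {I : Finset ℕ} (hI : I.Nonempty) :
    ∃ a ∈ I, Finset.Icc a (a + longestRun I - 1) ⊆ I := by
  obtain ⟨a, ha, hL⟩ := Finset.exists_mem_eq_sup I hI
    (fun a => ((Finset.Icc a (I.sup id)).filter fun b => Finset.Icc a b ⊆ I).card)
  have hs : id a ≤ I.sup id := Finset.le_sup ha
  simp only [id] at hs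
  set S := (Finset.Icc a (I.sup id)).filter (fun b => Finset.Icc a b ⊆ I) with hS
  have haS : a ∈ S := by
    simp only [hS, Finset.mem_filter, Finset.mem_Icc]
    refine ⟨⟨le_refl a, hs⟩, ?_⟩
    intro x hx
    rw [Finset.mem_Icc] at hx
    have : x = a := le_antisymm hx.2 hx.1
    rwa [this]
  have hSne : S.Nonempty := ⟨a, haS⟩
  set m := S.max' hSne with hm
  have hmS : m ∈ S := S.max'_mem hSne
  have hmfacts : a ≤ m ∧ m ≤ I.sup id ∧ Finset.Icc a m ⊆ I := by
    have := hmS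
    simp only [hS, Finset.mem_filter, Finset.mem_Icc] at this
    exact ⟨this.1.1, this.1.2, this.2⟩
  have hsub1 : Finset.Icc a m ⊆ S := by
    intro c hc
    rw [Finset.mem_Icc] at hc
    simp only [hS, Finset.mem_filter, Finset.mem_Icc]
    refine ⟨⟨hc.1, le_trans hc.2 hmfacts.2.1⟩, ?_⟩
    intro x hx
    rw [Finset.mem_Icc] at hx
    exact hmfacts.2.2 (Finset.mem_Icc.mpr ⟨hx.1, le_trans hx.2 hc.2⟩)
  have hsub2 : S ⊆ Finset.Icc a m := by
    intro c hc
    have h1 : a ≤ c := by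
      have := hc; simp only [hS, Finset.mem_filter, Finset.mem_Icc] at this; exact this.1.1
    exact Finset.mem_Icc.mpr ⟨h1, Finset.le_max' S c hc⟩
  have hSeq : S = Finset.Icc a m := le_antisymm hsub2 hsub1
  have hcard : longestRun I = m + 1 - a := by
    unfold longestRun
    rw [hL, hSeq, Nat.card_Icc]
  refine ⟨a, ha, ?_⟩
  have hma : a + longestRun I - 1 = m := by omega
  rw [hma]
  exact hmfacts.2.2

end Aux

section Rlen

def rlenF (J : Finset ℕ) : ℕ → ℕ → ℕ
  | 0, _ => 0
  | (f+1), p => if p ∈ J then rlenF J f (p+1) + 1 else 0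

def rlen (I : Finset ℕ) (p : ℕ) : ℕ :=
  rlenF (I.erase (I.sup id)) (I.sup id + 1 - p) p

lemma rlen_rec (I : Finset ℕ) (p : ℕ) :
    rlen I p = if p ∈ I.erase (I.sup id) then rlen I (p+1) + 1 else 0 := by
  rcases le_or_gt p (I.sup id) with h | h
  · have h1 : I.sup id + 1 - p = (I.sup id + 1 - (p+1)) + 1 := by omega
    rw [rlen, h1]
    rfl
  · have h0 : I.sup id + 1 - p = 0 := by omega
    have hni : p ∉ I.erase (I.sup id) := fun hp => absurd (mem_erase_lt_sup hp) (by omega)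
    rw [rlen, h0, if_neg hni]
    rfl

lemma rlen_eq_zero {I : Finset ℕ} {p : ℕ} (hp : p ∉ I.erase (I.sup id)) :
    rlen I p = 0 := by rw [rlen_rec, if_neg hp]

lemma rlen_mem {I : Finset ℕ} : ∀ (k p : ℕ), k < rlen I p → p + k ∈ I.erase (I.sup id) := by
  intro k
  induction k with
  | zero =>
    intro p hp
    by_contra hc
    rw [Nat.add_zero] at hc
    rw [rlen_eq_zero hc] at hp
    omega
  | succ k ih =>
    intro p hp
    have hpJ : p ∈ I.erase (I.sup id) := by
      by_contra hc
      rw [rlen_eq_zero hc] at hp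
      omega
    rw [rlen_rec, if_pos hpJ] at hp
    have := ih (p+1) (by omega)
    have he : p + (k+1) = (p+1) + k := by omega
    rwa [he]

lemma rlen_ge {I : Finset ℕ} : ∀ (k p : ℕ),
    (∀ j < k, p + j ∈ I.erase (I.sup id)) → k ≤ rlen I p := by
  intro k
  induction k with
  | zero => intro p _; omega
  | succ k ih =>
    intro p hp
    have hpJ : p ∈ I.erase (I.sup id) := by
      have := hp 0 (by omega); simpa using this
    have h1 : k ≤ rlen I (p+1) := by
      apply ih
      intro j hj
      have := hp (j+1) (by omega)
      have he : p + (j+1) = (p+1) + j := by omega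
      rwa [he] at this
    rw [rlen_rec, if_pos hpJ]
    omega

lemma rlen_add {I : Finset ℕ} : ∀ (k p : ℕ), k ≤ rlen I p →
    rlen I (p + k) = rlen I p - k := by
  intro k
  induction k with
  | zero => intro p _; simp
  | succ k ih =>
    intro p hp
    have hpJ : p ∈ I.erase (I.sup id) := by
      by_contra hc
      rw [rlen_eq_zero hc] at hp
      omega
    have hr : rlen I p = rlen I (p+1) + 1 := by rw [rlen_rec, if_pos hpJ]
    have h1 : k ≤ rlen I (p+1) := by omega
    have := ih (p+1) h1
    have he : p + (k+1) = (p+1) + k := by omega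
    rw [he, this]
    omega

lemma rlen_bound {I : Finset ℕ} (hI : I.Nonempty) (p : ℕ) :
    rlen I p + (if p + rlen I p = I.sup id then 1 else 0) ≤ longestRun I := by
  rcases Nat.eq_zero_or_pos (rlen I p) with h0 | h1
  · rw [h0]
    split_ifs
    · simpa using longestRun_pos hI
    · simp
  · have hpJ : p ∈ I.erase (I.sup id) := by
      have := rlen_mem 0 p h1; simpa using this
    have hpI : p ∈ I := Finset.mem_of_mem_erase hpJ
    have hrun : ∀ j < rlen I p, p + j ∈ I := fun j hj =>
      Finset.mem_of_mem_erase (rlen_mem j p hj)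
    split_ifs with hf
    · have hsub : Finset.Icc p (I.sup id) ⊆ I := by
        intro x hx
        rw [Finset.mem_Icc] at hx
        rcases eq_or_lt_of_le hx.2 with he | hlt
        · rw [he]; exact sup_mem_of_ne hI
        · have hj : x - p < rlen I p := by omega
          have := hrun (x - p) hj
          have he2 : p + (x - p) = x := by omega
          rwa [he2] at this
      have := run_le_longestRun hpI hsub
      omega
    · have hsub : Finset.Icc p (p + rlen I p - 1) ⊆ I := by
        intro x hx
        rw [Finset.mem_Icc] at hx
        have hj : x - p < rlen I p := by omega
        have := hrun (x - p) hj
        have he2 : p + (x - p) = x := by omega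
        rwa [he2] at this
      have := run_le_longestRun hpI hsub
      omega

end Rlen
section Main

/-- The defining set of `bcoef I i`. -/
def bset (I : Finset ℕ) (i : ℕ) : Set (ℕ → ℕ) :=
  {v ∈ Seqs (I.sup id) (i + 1) |
    Des (I.sup id) v = ↑(I.erase (I.sup id)) ∧
    (∀ l ∈ Finset.Icc 2 (i + 1), ∃ j ∈ Finset.Icc 1 (I.sup id), v j = l) ∧
    v (I.sup id) ≠ 1}

lemma bcoef_eq (I : Finset ℕ) (i : ℕ) : bcoef I i = (bset I i).ncard := rfl

lemma bset_finite (I : Finset ℕ) (i : ℕ) : (bset I i).Finite := by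
  have hinj : Set.InjOn
      (fun v (p : Finset.Icc 1 (I.sup id)) => (⟨min (v p.1) (i+1), by omega⟩ : Fin (i+2)))
      (bset I i) := by
    intro u hu v hv h
    funext p
    by_cases hp : p ∈ Finset.Icc 1 (I.sup id)
    · have h1 := congrFun h ⟨p, hp⟩
      simp only [Fin.mk.injEq] at h1
      have hu1 : u p ∈ Finset.Icc 1 (i+1) := hu.1.1 p hp
      have hv1 : v p ∈ Finset.Icc 1 (i+1) := hv.1.1 p hp
      rw [Finset.mem_Icc] at hu1 hv1
      omega
    · rw [hu.1.2 p hp, hv.1.2 p hp]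
  exact Set.Finite.of_finite_image (Set.toFinite _) hinj

/-- Chains of descents force strictly decreasing values. -/
lemma desc_chain {ℓ : ℕ} {v : ℕ → ℕ} {a : ℕ} :
    ∀ k, (∀ j < k, (a + j) ∈ Des ℓ v) → v (a + k) + k ≤ v a := by
  intro k
  induction k with
  | zero => simp
  | succ k ih =>
    intro h
    have h1 := ih (fun j hj => h j (by omega))
    have h2 := h k (by omega)
    simp only [Des, Set.mem_setOf_eq] at h2
    have h3 : v (a + k + 1) < v (a + k) := h2.2.2
    have he : a + (k + 1) = a + k + 1 := by omega
    rw [he]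
    omega

end Main

section Bump

def bump (v : ℕ → ℕ) (c q : ℕ) (p : ℕ) : ℕ :=
  if c < v p ∨ (v p = c ∧ p = q) then v p + 1 else v p

lemma bump_ge (v : ℕ → ℕ) (c q p : ℕ) : v p ≤ bump v c q p := by
  unfold bump; split <;> omega

lemma bump_le (v : ℕ → ℕ) (c q p : ℕ) : bump v c q p ≤ v p + 1 := by
  unfold bump; split <;> omega

lemma bump_of_lt (v : ℕ → ℕ) (c q p : ℕ) (h : v p < c) : bump v c q p = v p := by
  unfold bump
  rw [if_neg]
  rintro (h1 | ⟨h2, _⟩) <;> omega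

lemma bump_of_ne (v : ℕ → ℕ) (c q p : ℕ) (h : v p = c) (h2 : p ≠ q) :
    bump v c q p = c := by
  unfold bump
  rw [if_neg]
  · exact h
  · rintro (h1 | ⟨_, h3⟩)
    · omega
    · exact h2 h3

lemma bump_q (v : ℕ → ℕ) (c q : ℕ) (hq : v q = c) : bump v c q q = c + 1 := by
  unfold bump
  rw [if_pos (Or.inr ⟨hq, rfl⟩), hq]

lemma bump_gt (v : ℕ → ℕ) (c q p : ℕ) (h : c < v p) : bump v c q p = v p + 1 := by
  unfold bump
  rw [if_pos (Or.inl h)]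

lemma bump_desc_iff (v : ℕ → ℕ) (c q p : ℕ) (hmax : v (p+1) = c → p + 1 ≤ q) :
    (bump v c q (p+1) < bump v c q p ↔ v (p+1) < v p) := by
  unfold bump
  by_cases hvc : v (p+1) = c
  · have hle := hmax hvc
    split_ifs with h1 h2 h2 <;> omega
  · split_ifs with h1 h2 h2 <;> omega

lemma step_lemma {I : Finset ℕ} (hI : I.Nonempty) (hIpos : ∀ x ∈ I, 1 ≤ x) {i : ℕ}
    (hiℓ : i < I.sup id) (hne : (bset I i).Nonempty) : (bset I (i+1)).Nonempty := by
  obtain ⟨v, hv⟩ := hne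
  obtain ⟨⟨hv1, hv2⟩, hDes, hcov, hlast⟩ := hv
  have hℓ1 : 1 ≤ I.sup id := by
    obtain ⟨a, ha⟩ := hI
    have h1 := hIpos a ha
    have h2 : id a ≤ I.sup id := Finset.le_sup ha
    simp only [id] at h2
    omega
  have hvℓ : 2 ≤ v (I.sup id) ∧ v (I.sup id) ≤ i + 1 := by
    have := hv1 (I.sup id) (Finset.mem_Icc.mpr ⟨hℓ1, le_refl _⟩)
    rw [Finset.mem_Icc] at this
    omega
  have hc : ∃ c, 1 ≤ c ∧ (∃ p ∈ Finset.Icc 1 (I.sup id), v p = c) ∧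
      (c = 1 ∨ ∃ p₁ ∈ Finset.Icc 1 (I.sup id), ∃ p₂ ∈ Finset.Icc 1 (I.sup id),
        p₁ ≠ p₂ ∧ v p₁ = c ∧ v p₂ = c) := by
    by_cases h1 : ∃ p ∈ Finset.Icc 1 (I.sup id), v p = 1
    · exact ⟨1, le_refl 1, h1, Or.inl rfl⟩
    · push_neg at h1
      have hmaps : ∀ p ∈ Finset.Icc 1 (I.sup id), v p ∈ Finset.Icc 2 (i+1) := by
        intro p hp
        have h2 := hv1 p hp
        rw [Finset.mem_Icc] at h2 ⊢
        have h3 := h1 p hp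
        omega
      have hcard : (Finset.Icc 2 (i+1)).card < (Finset.Icc 1 (I.sup id)).card := by
        rw [Nat.card_Icc, Nat.card_Icc]; omega
      obtain ⟨p₁, hp₁, p₂, hp₂, hne', heq⟩ :=
        Finset.exists_ne_map_eq_of_card_lt_of_maps_to hcard hmaps
      refine ⟨v p₁, ?_, ⟨p₁, hp₁, rfl⟩, Or.inr ⟨p₁, hp₁, p₂, hp₂, hne', rfl, heq.symm⟩⟩
      have := hmaps p₁ hp₁
      rw [Finset.mem_Icc] at this
      omega
  obtain ⟨c, hc1, ⟨p₀, hp₀, hvp₀⟩, hc2⟩ := hc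
  have hTne : ((Finset.Icc 1 (I.sup id)).filter (fun r => v r = c)).Nonempty :=
    ⟨p₀, Finset.mem_filter.mpr ⟨hp₀, hvp₀⟩⟩
  set q := ((Finset.Icc 1 (I.sup id)).filter (fun r => v r = c)).max' hTne with hq
  have hqT := Finset.max'_mem _ hTne
  have hqIcc : q ∈ Finset.Icc 1 (I.sup id) := (Finset.mem_filter.mp hqT).1
  have hvq : v q = c := (Finset.mem_filter.mp hqT).2
  have hmax : ∀ p, 1 ≤ p → p ≤ I.sup id → v p = c → p ≤ q := fun p h1 h2 h3 =>
    Finset.le_max' ((Finset.Icc 1 (I.sup id)).filter (fun r => v r = c)) p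
      (Finset.mem_filter.mpr ⟨Finset.mem_Icc.mpr ⟨h1, h2⟩, h3⟩)
  have hcle : c ≤ i + 1 := by
    have := hv1 p₀ hp₀
    rw [Finset.mem_Icc] at this
    omega
  refine ⟨bump v c q, ⟨⟨?_, ?_⟩, ?_, ?_, ?_⟩⟩
  · intro p hp
    have h2 := hv1 p hp
    rw [Finset.mem_Icc] at h2 ⊢
    have g1 := bump_ge v c q p
    have g2 := bump_le v c q p
    omega
  · intro p hp
    have h0 := hv2 p hp
    unfold bump
    rw [if_neg]
    · exact h0
    · rintro (h' | ⟨h', _⟩) <;> omega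
  · rw [← hDes]
    ext p
    simp only [Des, Set.mem_setOf_eq]
    constructor
    · rintro ⟨h1, h2, h3⟩
      exact ⟨h1, h2, by
        rw [← bump_desc_iff v c q p (fun h => hmax (p+1) (by omega) (by omega) h)]
        exact h3⟩
    · rintro ⟨h1, h2, h3⟩
      exact ⟨h1, h2, by
        rw [bump_desc_iff v c q p (fun h => hmax (p+1) (by omega) (by omega) h)]
        exact h3⟩
  · intro l hl
    rw [Finset.mem_Icc] at hl
    rcases lt_trichotomy l c with h | h | h
    · obtain ⟨j, hj, hvj⟩ := hcov l (Finset.mem_Icc.mpr ⟨hl.1, by omega⟩)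
      exact ⟨j, hj, by rw [bump_of_lt v c q j (by omega)]; exact hvj⟩
    · rcases hc2 with h1 | ⟨p₁, hp₁, p₂, hp₂, hne', he₁, he₂⟩
      · omega
      · rcases eq_or_ne p₁ q with hq1 | hq1
        · refine ⟨p₂, hp₂, ?_⟩
          rw [bump_of_ne v c q p₂ he₂ (by omega)]
          omega
        · refine ⟨p₁, hp₁, ?_⟩
          rw [bump_of_ne v c q p₁ he₁ hq1]
          omega
    · rcases eq_or_lt_of_le (show c + 1 ≤ l by omega) with h2 | h2
      · exact ⟨q, hqIcc, by rw [bump_q v c q hvq]; omega⟩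
      · obtain ⟨j, hj, hvj⟩ := hcov (l-1) (Finset.mem_Icc.mpr ⟨by omega, by omega⟩)
        refine ⟨j, hj, ?_⟩
        rw [bump_gt v c q j (by omega)]
        omega
  · have := bump_ge v c q (I.sup id)
    omega

end Bump
section Base

def hseq (I : Finset ℕ) (p : ℕ) : ℕ :=
  if 1 ≤ p ∧ p ≤ I.sup id then
    1 + rlen I p + (if p + rlen I p = I.sup id then 1 else 0)
  else 0

lemma hseq_in (I : Finset ℕ) (p : ℕ) (h1 : 1 ≤ p) (h2 : p ≤ I.sup id) :
    hseq I p = 1 + rlen I p + (if p + rlen I p = I.sup id then 1 else 0) := by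
  unfold hseq
  rw [if_pos ⟨h1, h2⟩]

lemma base_mem {I : Finset ℕ} (hI : I.Nonempty) (hIpos : ∀ x ∈ I, 1 ≤ x) :
    hseq I ∈ bset I (longestRun I) := by
  have hℓ1 : 1 ≤ I.sup id := by
    obtain ⟨a, ha⟩ := hI
    have h1 := hIpos a ha
    have h2 : id a ≤ I.sup id := Finset.le_sup ha
    simp only [id] at h2
    omega
  have hℓrlen : rlen I (I.sup id) = 0 :=
    rlen_eq_zero (Finset.notMem_erase _ _)
  refine ⟨⟨?_, ?_⟩, ?_, ?_, ?_⟩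
  · intro p hp
    rw [Finset.mem_Icc] at hp
    rw [hseq_in I p hp.1 hp.2, Finset.mem_Icc]
    have hb := rlen_bound hI p
    split_ifs at hb ⊢ <;> omega
  · intro p hp
    rw [Finset.mem_Icc] at hp
    unfold hseq
    rw [if_neg]
    omega
  · ext p
    simp only [Des, Set.mem_setOf_eq, Finset.coe_erase, Set.mem_diff,
      Finset.mem_coe, Set.mem_singleton_iff]
    constructor
    · rintro ⟨h1, h2, h3⟩
      by_contra hc
      have hpJ : p ∉ I.erase (I.sup id) := by
        intro hmem
        rw [Finset.mem_erase] at hmem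
        exact hc ⟨hmem.2, hmem.1⟩
      have hr0 : rlen I p = 0 := rlen_eq_zero hpJ
      have hp1 : hseq I p = 1 := by
        rw [hseq_in I p h1 (by omega), hr0]
        rw [if_neg (by omega)]
      have hp2 : 1 ≤ hseq I (p+1) := by
        rw [hseq_in I (p+1) (by omega) (by omega)]
        omega
      omega
    · rintro ⟨hpI, hpne⟩
      have hpJ : p ∈ I.erase (I.sup id) := Finset.mem_erase.mpr ⟨hpne, hpI⟩
      have h1 : 1 ≤ p := hIpos p hpI
      have h2 : p < I.sup id := mem_erase_lt_sup hpJ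
      refine ⟨h1, h2, ?_⟩
      have hr : rlen I p = rlen I (p+1) + 1 := by rw [rlen_rec, if_pos hpJ]
      rw [hseq_in I p h1 (by omega), hseq_in I (p+1) (by omega) (by omega), hr]
      have he : p + (rlen I (p+1) + 1) = (p+1) + rlen I (p+1) := by omega
      rw [he]
      split_ifs <;> omega
  · intro l hl
    rw [Finset.mem_Icc] at hl
    obtain ⟨a, ha, hrun⟩ := exists_run hI
    have hL1 : 1 ≤ longestRun I := longestRun_pos hI
    have ha1 : 1 ≤ a := hIpos a ha
    have haL : a + longestRun I - 1 ∈ I :=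
      hrun (Finset.mem_Icc.mpr ⟨by omega, le_refl _⟩)
    have haℓ : a + longestRun I - 1 ≤ I.sup id := by
      have h := Finset.le_sup (f := id) haL
      simpa using h
    by_cases hcase : a + longestRun I - 1 = I.sup id
    · have hJ : ∀ j, j < longestRun I - 1 → a + j ∈ I.erase (I.sup id) := by
        intro j hj
        refine Finset.mem_erase.mpr ⟨by omega, hrun (Finset.mem_Icc.mpr ⟨by omega, by omega⟩)⟩
      have hge : longestRun I - 1 ≤ rlen I a := rlen_ge (longestRun I - 1) a (fun j hj => hJ j hj)
      have hle : rlen I a ≤ longestRun I - 1 := by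
        by_contra hcon
        push_neg at hcon
        have hm := rlen_mem (longestRun I - 1) a hcon
        have h2 := Finset.ne_of_mem_erase hm
        omega
      have hra : rlen I a = longestRun I - 1 := le_antisymm hle hge
      refine ⟨a + (longestRun I + 1 - l), Finset.mem_Icc.mpr ⟨by omega, by omega⟩, ?_⟩
      have hrj := rlen_add (I := I) (longestRun I + 1 - l) a (by omega)
      rw [hseq_in I _ (by omega) (by omega), hrj, hra]
      rw [if_pos (by omega)]
      omega
    · have hJ : ∀ j, j < longestRun I → a + j ∈ I.erase (I.sup id) := by
        intro j hj
        refine Finset.mem_erase.mpr ⟨by omega, hrun (Finset.mem_Icc.mpr ⟨by omega, by omega⟩)⟩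
      have hge : longestRun I ≤ rlen I a := rlen_ge (longestRun I) a (fun j hj => hJ j hj)
      have hb := rlen_bound hI a
      have hle : rlen I a ≤ longestRun I := by
        split_ifs at hb <;> omega
      have hra : rlen I a = longestRun I := le_antisymm hle hge
      rw [hra] at hb
      have hflag : a + longestRun I ≠ I.sup id := by
        intro hf
        rw [if_pos hf] at hb
        omega
      refine ⟨a + (longestRun I + 1 - l), Finset.mem_Icc.mpr ⟨by omega, by omega⟩, ?_⟩
      have hrj := rlen_add (I := I) (longestRun I + 1 - l) a (by omega)
      rw [hseq_in I _ (by omega) (by omega), hrj, hra]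
      rw [if_neg (by omega)]
      omega
  · rw [hseq_in I (I.sup id) hℓ1 (le_refl _), hℓrlen]
    rw [if_pos (by omega)]
    omega

lemma bset_nonempty {I : Finset ℕ} (hI : I.Nonempty) (hIpos : ∀ x ∈ I, 1 ≤ x) :
    ∀ i, longestRun I ≤ i → i ≤ I.sup id → (bset I i).Nonempty := by
  intro i hLi
  induction i, hLi using Nat.le_induction with
  | base => exact fun _ => ⟨hseq I, base_mem hI hIpos⟩
  | succ n hn ih =>
    intro h
    exact step_lemma hI hIpos (by omega) (ih (by omega))

end Base
/-- `b_i(I) > 0` for `L ≤ i ≤ α_t`, and `b_i(I) = 0` for `i < L` or `i > α_t`. -/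
theorem stmt_12 (I : Finset ℕ) (hI : I.Nonempty) (hIpos : ∀ x ∈ I, 1 ≤ x) (i : ℕ) :
    (longestRun I ≤ i ∧ i ≤ I.sup id → 0 < bcoef I i) ∧
    (i < longestRun I ∨ I.sup id < i → bcoef I i = 0) := by
  constructor
  · rintro ⟨hL, hiu⟩
    rw [bcoef_eq, Set.ncard_pos (bset_finite I i)]
    exact bset_nonempty hI hIpos i hL hiu
  · rintro (h | h)
    · -- i < longestRun I
      rw [bcoef_eq]
      have hempty : bset I i = ∅ := by
        rw [Set.eq_empty_iff_forall_notMem]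
        rintro v ⟨⟨hv1, hv2⟩, hDes, hcov, hlast⟩
        obtain ⟨a, ha, hrun⟩ := exists_run hI
        have hL1 : 1 ≤ longestRun I := longestRun_pos hI
        have ha1 : 1 ≤ a := hIpos a ha
        have haL : a + longestRun I - 1 ∈ I :=
          hrun (Finset.mem_Icc.mpr ⟨by omega, le_refl _⟩)
        have haℓ : a + longestRun I - 1 ≤ I.sup id := by
          have h2 := Finset.le_sup (f := id) haL
          simpa using h2
        have hva : v a ≤ i + 1 := by
          have := hv1 a (Finset.mem_Icc.mpr ⟨ha1, by omega⟩)
          rw [Finset.mem_Icc] at this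
          omega
        have hvℓ : 2 ≤ v (I.sup id) := by
          have := hv1 (I.sup id) (Finset.mem_Icc.mpr ⟨by omega, le_refl _⟩)
          rw [Finset.mem_Icc] at this
          omega
        by_cases hcase : a + longestRun I - 1 = I.sup id
        · have hchain : ∀ j, j < longestRun I - 1 → (a + j) ∈ Des (I.sup id) v := by
            intro j hj
            rw [hDes]
            exact Finset.mem_coe.mpr (Finset.mem_erase.mpr
              ⟨by omega, hrun (Finset.mem_Icc.mpr ⟨by omega, by omega⟩)⟩)
          have hch := desc_chain (longestRun I - 1) (fun j hj => hchain j hj)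
          have he : a + (longestRun I - 1) = I.sup id := by omega
          rw [he] at hch
          omega
        · have hchain : ∀ j, j < longestRun I → (a + j) ∈ Des (I.sup id) v := by
            intro j hj
            rw [hDes]
            exact Finset.mem_coe.mpr (Finset.mem_erase.mpr
              ⟨by omega, hrun (Finset.mem_Icc.mpr ⟨by omega, by omega⟩)⟩)
          have hch := desc_chain (longestRun I) (fun j hj => hchain j hj)
          have hvend : 1 ≤ v (a + longestRun I) := by
            have := hv1 (a + longestRun I) (Finset.mem_Icc.mpr ⟨by omega, by omega⟩)
            rw [Finset.mem_Icc] at this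
            omega
          omega
      rw [hempty, Set.ncard_empty]
    · -- I.sup id < i
      rw [bcoef_eq]
      have hempty : bset I i = ∅ := by
        rw [Set.eq_empty_iff_forall_notMem]
        rintro v ⟨⟨hv1, hv2⟩, hDes, hcov, hlast⟩
        have hsub : Finset.Icc 2 (i+1) ⊆ (Finset.Icc 1 (I.sup id)).image v := by
          intro l hl
          obtain ⟨j, hj, he⟩ := hcov l hl
          exact Finset.mem_image.mpr ⟨j, hj, he⟩
        have h1 := Finset.card_le_card hsub
        have h2 := Finset.card_image_le (s := Finset.Icc 1 (I.sup id)) (f := v)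
        rw [Nat.card_Icc] at h1
        rw [Nat.card_Icc] at h2
        omega
      rw [hempty, Set.ncard_empty]
end
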